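/- arXiv:2306.02989 — 8 statements merged into one kernel-verified Lean document; each statement's English description precedes it below -/
import Mathlib

section
/- Let G be a group generated by a finite conjugacy class X, let m be the order of the conjugation action of any x ∈ X on X, let < be a total order on X, and let z be the maximal element of (X, <). Then for every n ≥ 0, every product of n elements of X (i.e., every element of X^n ⊆ G) can be written in the form x₁^{n₁} x₂^{n₂} ⋯ x_k^{n_k} z^l with k, l ≥ 0, n₁ + n₂ + ⋯ + n_k + l = n, x₁ < x₂ < ⋯ < x_k < z in X, and 1 ≤ n_i ≤ m − 1 for all 1 ≤ i ≤ k. -/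
namespace Stmt0Aux

variable {G : Type*} [Group G]

/-- product of a list of (base, exponent) pairs -/
def prodPS (ps : List (G × ℕ)) : G := (ps.map fun p => p.1 ^ p.2).prod

/-- total exponent sum -/
def totPS (ps : List (G × ℕ)) : ℕ := (ps.map Prod.snd).sum

def GoodPS (X : Set G) (m : ℕ) (lt : G → G → Prop) (z : G) (ps : List (G × ℕ)) : Prop :=
  (∀ p ∈ ps, p.1 ∈ X ∧ lt p.1 z ∧ 1 ≤ p.2 ∧ p.2 ≤ m - 1) ∧
  ps.Pairwise (fun p q => lt p.1 q.1)

def NF (X : Set G) (m : ℕ) (lt : G → G → Prop) (z : G) (t : ℕ) (g : G) : Prop :=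
  ∃ ps l, GoodPS X m lt z ps ∧ totPS ps + l = t ∧ g = prodPS ps * z ^ l

@[simp] lemma prodPS_nil : prodPS ([] : List (G × ℕ)) = 1 := rfl
@[simp] lemma prodPS_cons (p : G × ℕ) (ps : List (G × ℕ)) :
    prodPS (p :: ps) = p.1 ^ p.2 * prodPS ps := rfl
@[simp] lemma totPS_nil : totPS ([] : List (G × ℕ)) = 0 := rfl
@[simp] lemma totPS_cons (p : G × ℕ) (ps : List (G × ℕ)) :
    totPS (p :: ps) = p.2 + totPS ps := rfl

end Stmt0Aux

open Stmt0Aux in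
/-- Let `G` be a group generated by a finite conjugacy class `X`, let `m` be the
order of the conjugation action of any `x ∈ X` on `X`, let `lt` be a (strict) total order on `X`,
and let `z` be the maximal element of `(X, lt)`. Then for every `n ≥ 0`, every product of `n`
elements of `X` can be written as `x₁^{n₁} ⋯ x_k^{n_k} z^l` with `n₁ + ⋯ + n_k + l = n`,
`x₁ < x₂ < ⋯ < x_k < z` in `X`, and `1 ≤ nᵢ ≤ m - 1` for all `i`. -/
theorem stmt0 {G : Type*} [Group G] (X : Set G)
    (hXconj : ∃ x : G, X = {y | IsConj x y})
    (hXfin : X.Finite)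
    (hXgen : Subgroup.closure X = ⊤)
    (m : ℕ) (hm_pos : 0 < m)
    (hm : ∀ x ∈ X, ∀ y ∈ X, x ^ m * y = y * x ^ m)
    (hm_min : ∀ x ∈ X, ∀ m' : ℕ, 0 < m' → (∀ y ∈ X, x ^ m' * y = y * x ^ m') → m ≤ m')
    (lt : G → G → Prop)
    (hlt_irrefl : ∀ a ∈ X, ¬ lt a a)
    (hlt_trans : ∀ a ∈ X, ∀ b ∈ X, ∀ c ∈ X, lt a b → lt b c → lt a c)
    (hlt_total : ∀ a ∈ X, ∀ b ∈ X, a ≠ b → lt a b ∨ lt b a)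
    (z : G) (hz : z ∈ X) (hz_max : ∀ a ∈ X, a ≠ z → lt a z) :
    ∀ (n : ℕ) (w : List G), w.length = n → (∀ a ∈ w, a ∈ X) →
      ∃ (k l : ℕ) (x : Fin k → G) (e : Fin k → ℕ),
        (∀ i, x i ∈ X) ∧
        (∀ i j : Fin k, i < j → lt (x i) (x j)) ∧
        (∀ i, lt (x i) z) ∧
        (∀ i, 1 ≤ e i ∧ e i ≤ m - 1) ∧
        (∑ i, e i) + l = n ∧
        w.prod = (List.ofFn fun i => x i ^ e i).prod * z ^ l := by
  obtain ⟨x₀, hX₀⟩ := hXconj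
  -- every element is in the closure of X
  have hmemcl : ∀ g : G, g ∈ Subgroup.closure X := by
    intro g; rw [hXgen]; trivial
  -- any two elements of X are conjugate
  have hconj2 : ∀ a ∈ X, ∀ b ∈ X, ∃ c : G, c * a * c⁻¹ = b := by
    intro a ha b hb
    rw [hX₀] at ha hb
    exact isConj_iff.mp (ha.symm.trans hb)
  -- X is closed under conjugation
  have hconjmem : ∀ a ∈ X, ∀ g : G, g * a * g⁻¹ ∈ X := by
    intro a ha g
    rw [hX₀] at ha ⊢
    exact ha.trans (isConj_iff.mpr ⟨g, rfl⟩)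
  -- x^m is central for x ∈ X
  have hcentral : ∀ a ∈ X, ∀ g : G, a ^ m * g = g * a ^ m := by
    intro a ha g
    refine Subgroup.closure_induction (k := X)
      (p := fun g _ => a ^ m * g = g * a ^ m)
      (fun y hy => hm a ha y hy) (by group)
      (fun u v _ _ hu hv => by
        show a ^ m * (u * v) = (u * v) * a ^ m
        rw [← mul_assoc, hu, mul_assoc, hv, mul_assoc])
      (fun u _ hu => by
        show a ^ m * u⁻¹ = u⁻¹ * a ^ m
        have h2 : u⁻¹ * (a ^ m * u) * u⁻¹ = u⁻¹ * (u * a ^ m) * u⁻¹ := by rw [hu]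
        group at h2
        simpa using h2.symm) (hmemcl g)
  -- x^m = z^m for all x ∈ X
  have hpoweq : ∀ a ∈ X, a ^ m = z ^ m := by
    intro a ha
    obtain ⟨c, hc⟩ := hconj2 a ha z hz
    have h2 : z ^ m = c * a ^ m * c⁻¹ := by rw [← hc, conj_pow]
    rw [h2, ← hcentral a ha c]
    group
  -- if X has two distinct elements then m ≥ 2
  have htwole : ∀ a ∈ X, ∀ b ∈ X, a ≠ b → 2 ≤ m := by
    intro a ha b hb hab
    by_contra hlt2
    have hm1 : m = 1 := by omega
    have hcomm : ∀ g : G, a * g = g * a := by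
      intro g
      have := hcentral a ha g
      rwa [hm1, pow_one] at this
    obtain ⟨c, hc⟩ := hconj2 a ha b hb
    apply hab
    rw [← hc, ← hcomm c]
    group
  -- rank function
  set rank : G → ℕ := fun y => Set.ncard {c ∈ X | lt c y} with hrank
  have hrank_lt : ∀ a ∈ X, ∀ b ∈ X, lt a b → rank a < rank b := by
    intro a ha b hb hab
    apply Set.ncard_lt_ncard
    · constructor
      · rintro c ⟨hcX, hca⟩
        exact ⟨hcX, hlt_trans c hcX a ha b hb hca hab⟩
      · intro hsub
        have : a ∈ {c ∈ X | lt c a} := hsub ⟨ha, hab⟩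
        exact hlt_irrefl a ha this.2
    · exact hXfin.subset (fun c hc => hc.1)
  -- main insertion lemma
  have ins : ∀ t r : ℕ, ∀ y g : G, y ∈ X → rank y ≤ r → NF X m lt z t g →
      NF X m lt z (t + 1) (y * g) := by
    intro t
    induction t using Nat.strong_induction_on with
    | _ t IHt =>
    intro r
    induction r using Nat.strong_induction_on with
    | _ r IHr =>
    intro y g hy hyr hg
    obtain ⟨ps, l, ⟨hgood1, hgood2⟩, htot, hprod⟩ := hg
    match ps with
    | [] =>
      simp only [totPS_nil, Nat.zero_add] at htot
      simp only [prodPS_nil, one_mul] at hprod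
      by_cases hyz : y = z
      · refine ⟨[], l + 1, ⟨by simp, by simp⟩, by simp only [totPS_nil]; omega, ?_⟩
        rw [hprod, hyz]
        simp [pow_succ', prodPS]
      · have hyltz := hz_max y hy hyz
        have h2m := htwole y hy z hz hyz
        refine ⟨[(y, 1)], l, ⟨?_, by simp⟩,
          by simp only [totPS_cons, totPS_nil]; omega, ?_⟩
        · rintro p hp
          simp at hp
          subst hp
          exact ⟨hy, hyltz, le_rfl, by omega⟩
        · simp [prodPS, hprod]
    | (a, na) :: rest =>
      obtain ⟨haX, haz, hna1, hna2⟩ := hgood1 (a, na) (List.mem_cons_self)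
      have hrest1 : ∀ p ∈ rest, p.1 ∈ X ∧ lt p.1 z ∧ 1 ≤ p.2 ∧ p.2 ≤ m - 1 :=
        fun p hp => hgood1 p (List.mem_cons_of_mem _ hp)
      have hrest2 := hgood2.of_cons
      have hhead : ∀ p ∈ rest, lt a p.1 := fun p hp => (List.pairwise_cons.mp hgood2).1 p hp
      simp only [totPS_cons] at htot
      have htot' : na + totPS rest + l = t := htot
      clear htot
      simp only [prodPS_cons] at hprod
      by_cases hya : y = a
      · -- merge with the head
        by_cases hfull : na + 1 ≤ m - 1
        · refine ⟨(a, na + 1) :: rest, l, ⟨?_, ?_⟩,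
            by simp only [totPS_cons]; omega, ?_⟩
          · rintro p hp
            rcases List.mem_cons.mp hp with h | h
            · subst h; exact ⟨haX, haz, by omega, hfull⟩
            · exact hrest1 p h
          · exact List.pairwise_cons.mpr ⟨fun p hp => hhead p hp, hrest2⟩
          · rw [hprod, hya]
            simp only [prodPS_cons]
            rw [pow_succ']
            group
        · -- na = m - 1, so y * a^na = a^m = z^m is central
          have hnam : na + 1 = m := by omega
          refine ⟨rest, m + l, ⟨hrest1, hrest2⟩, by omega, ?_⟩
          have hstep : a * (a ^ na * prodPS rest * z ^ l)
              = a ^ (na + 1) * prodPS rest * z ^ l := by rw [pow_succ']; group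
          rw [hprod, hya, hstep, hnam, hcentral a haX (prodPS rest), mul_assoc,
            hpoweq a haX, ← pow_add]
      · rcases hlt_total y hy a haX hya with hlty | hlta
        · -- y < a : prepend (y, 1)
          have h2m := htwole y hy a haX hya
          have hyz : lt y z := hlt_trans y hy a haX z hz hlty haz
          refine ⟨(y, 1) :: (a, na) :: rest, l, ⟨?_, ?_⟩,
            by simp only [totPS_cons]; omega, ?_⟩
          · rintro p hp
            rcases List.mem_cons.mp hp with h | h
            · subst h; exact ⟨hy, hyz, le_rfl, by omega⟩
            · exact hgood1 p h
          · refine List.pairwise_cons.mpr ⟨?_, hgood2⟩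
            rintro p hp
            rcases List.mem_cons.mp hp with h | h
            · subst h; exact hlty
            · exact hlt_trans y hy a haX p.1 (hrest1 p h).1 hlty (hhead p h)
          · rw [hprod]
            simp only [prodPS_cons]
            group
        · -- a < y : push y past a^na
          set y' : G := (a ^ na)⁻¹ * y * a ^ na with hy'def
          have hy'X : y' ∈ X := by
            have := hconjmem y hy (a ^ na)⁻¹
            simpa [hy'def] using this
          have hcomm : a ^ na * y' = y * a ^ na := by
            rw [hy'def]; group
          set t₀ := totPS rest + l with ht₀
          have ht₀lt : t₀ < t := by omega
          set h : G := prodPS rest * z ^ l with hh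
          have hNFh : NF X m lt z t₀ h := ⟨rest, l, ⟨hrest1, hrest2⟩, rfl, rfl⟩
          have step1 : NF X m lt z (t₀ + 1) (y' * h) :=
            IHt t₀ ht₀lt (rank y') y' h hy'X le_rfl hNFh
          have hranka : rank a < r := lt_of_lt_of_le (hrank_lt a haX y hy hlta) hyr
          have key : ∀ j, j ≤ na → NF X m lt z (t₀ + 1 + j) (a ^ j * (y' * h)) := by
            intro j
            induction j with
            | zero => intro _; simpa using step1
            | succ j IH =>
              intro hjle
              have hprev := IH (by omega)
              have hstep : a ^ (j + 1) * (y' * h) = a * (a ^ j * (y' * h)) := by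
                rw [pow_succ']
                group
              rw [hstep]
              have hs : t₀ + 1 + j ≤ t := by omega
              have heq : t₀ + 1 + (j + 1) = (t₀ + 1 + j) + 1 := by omega
              rw [heq]
              rcases lt_or_eq_of_le hs with hslt | hseq
              · exact IHt (t₀ + 1 + j) hslt (rank a) a _ haX le_rfl hprev
              · rw [hseq]
                exact IHr (rank a) hranka a _ haX le_rfl (hseq ▸ hprev)
          have hfin := key na le_rfl
          have ht1 : t₀ + 1 + na = t + 1 := by omega
          rw [ht1] at hfin
          have : a ^ na * (y' * h) = y * g := by
            rw [← mul_assoc, hcomm, hprod, hh]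
            group
          rwa [this] at hfin
  -- every product of elements of X has a normal form
  have main : ∀ w : List G, (∀ a ∈ w, a ∈ X) → NF X m lt z w.length w.prod := by
    intro w
    induction w with
    | nil => intro _; exact ⟨[], 0, ⟨by simp, by simp⟩, rfl, by simp⟩
    | cons y w IH =>
      intro hw
      have h1 := IH (fun a ha => hw a (List.mem_cons_of_mem _ ha))
      have h2 := ins w.length (rank y) y w.prod (hw y (List.mem_cons_self)) le_rfl h1
      simpa using h2
  -- convert to the required form
  intro n w hlen hw
  obtain ⟨ps, l, ⟨hgood1, hgood2⟩, htot, hprod⟩ := main w hw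
  refine ⟨ps.length, l, fun i => (ps.get i).1, fun i => (ps.get i).2, ?_, ?_, ?_, ?_, ?_, ?_⟩
  · intro i; exact (hgood1 _ (ps.get_mem i)).1
  · intro i j hij; exact List.pairwise_iff_get.mp hgood2 i j hij
  · intro i; exact (hgood1 _ (ps.get_mem i)).2.1
  · intro i; exact (hgood1 _ (ps.get_mem i)).2.2
  · have : (List.ofFn fun i => (ps.get i).2).sum = totPS ps := by
      conv_rhs => rw [totPS, ← List.ofFn_get ps, List.map_ofFn]
      rfl
    rw [← hlen, ← htot, ← this, List.sum_ofFn]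
  · have : (List.ofFn fun i => (ps.get i).1 ^ (ps.get i).2) = ps.map fun p => p.1 ^ p.2 := by
      conv_rhs => rw [← List.ofFn_get ps, List.map_ofFn]
      rfl
    rw [hprod, prodPS, this]
end

section
/- Let G be a group generated by a finite conjugacy class X. Then the derived subgroup [G,G] of G is finite, and [G,G] is generated by the set { x y⁻¹ : x, y ∈ X }. -/
open Subgroup MulAction
open scoped commutatorElement

lemma comm_mul_center_right {G : Type*} [Group G] (a b z : G)
    (hz : z ∈ Subgroup.center G) : ⁅a * z, b⁆ = ⁅a, b⁆ := by
  have hz' := Subgroup.mem_center_iff.mp hz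
  simp only [commutatorElement_def, mul_inv_rev]
  rw [mul_assoc a z b, ← hz' b]
  group

lemma comm_mul_center_left {G : Type*} [Group G] (a b w : G)
    (hw : w ∈ Subgroup.center G) : ⁅a, b * w⁆ = ⁅a, b⁆ := by
  have hw' := Subgroup.mem_center_iff.mp hw
  simp only [commutatorElement_def, mul_inv_rev]
  rw [show a * (b * w) * a⁻¹ = a * b * (w * a⁻¹) by group, ← hw' a⁻¹]
  group

/-- Commutator is insensitive to multiplication by central elements. -/
lemma commutator_mul_center {G : Type*} [Group G] (a b z w : G)
    (hz : z ∈ Subgroup.center G) (hw : w ∈ Subgroup.center G) :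
    ⁅a * z, b * w⁆ = ⁅a, b⁆ :=
  (comm_mul_center_left (a * z) b w hw).trans (comm_mul_center_right a b z hz)

/-- Let `G` be a group generated by a finite conjugacy class `X`. Then the derived
subgroup `[G,G]` of `G` is finite, and `[G,G]` is generated by the set `{x y⁻¹ : x, y ∈ X}`. -/
theorem stmt2 {G : Type*} [Group G] (X : Set G)
    (hXconj : ∃ x : G, X = {y | IsConj x y})
    (hXfin : X.Finite)
    (hXgen : Subgroup.closure X = ⊤) :
    (commutator G : Set G).Finite ∧
    commutator G = Subgroup.closure {g : G | ∃ x ∈ X, ∃ y ∈ X, g = x * y⁻¹} := by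
  obtain ⟨x₀, hX⟩ := hXconj
  have hXmem : ∀ y : G, y ∈ X ↔ IsConj x₀ y := fun y => by rw [hX]; rfl
  -- X is closed under conjugation
  have hXc : ∀ g : G, ∀ x ∈ X, g * x * g⁻¹ ∈ X := by
    intro g x hx
    rw [hXmem] at hx ⊢
    exact hx.trans (isConj_iff.mpr ⟨g, rfl⟩)
  have hx₀ : x₀ ∈ X := (hXmem x₀).mpr (IsConj.refl x₀)
  -- any two elements of X are conjugate
  have hXconj2 : ∀ x ∈ X, ∀ y ∈ X, IsConj x y := by
    intro x hx y hy
    rw [hXmem] at hx hy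
    exact hx.symm.trans hy
  set S : Set G := {g : G | ∃ x ∈ X, ∃ y ∈ X, g = x * y⁻¹} with hS
  set H : Subgroup G := Subgroup.closure S with hHdef
  -- H is normal
  have hHnormal : H.Normal := by
    constructor
    intro n hn g
    have hmap : H.map (MulEquiv.toMonoidHom (MulAut.conj g)) ≤ H := by
      rw [hHdef, MonoidHom.map_closure]
      apply Subgroup.closure_le H |>.mpr
      rintro a ⟨b, ⟨x, hx, y, hy, rfl⟩, rfl⟩
      apply Subgroup.subset_closure
      refine ⟨g * x * g⁻¹, hXc g x hx, g * y * g⁻¹, hXc g y hy, ?_⟩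
      simp [MulAut.conj_apply, mul_assoc]
    have : (MulAut.conj g) n ∈ H := hmap ⟨n, hn, rfl⟩
    simpa [MulAut.conj_apply] using this
  -- S ⊆ commutator G
  have hS_sub : S ⊆ (commutator G : Set G) := by
    rintro g ⟨x, hx, y, hy, rfl⟩
    obtain ⟨c, hc⟩ := isConj_iff.mp (hXconj2 x hx y hy)
    have : x * y⁻¹ = ⁅x, c⁆ := by
      rw [← hc, commutatorElement_def]; group
    rw [this, _root_.commutator_def]
    exact Subgroup.commutator_mem_commutator (Subgroup.mem_top x) (Subgroup.mem_top c)
  -- commutator G ≤ H : via the quotient by H being cyclic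
  have hle : _root_.commutator G ≤ H := by
    rw [_root_.commutator_def, Subgroup.commutator_le]
    intro a _ b _
    let π : G →* G ⧸ H := QuotientGroup.mk' H
    have hπX : ∀ x ∈ X, π x = π x₀ := by
      intro x hx
      rw [QuotientGroup.mk'_apply, QuotientGroup.mk'_apply, QuotientGroup.eq_iff_div_mem]
      apply Subgroup.subset_closure
      exact ⟨x, hx, x₀, hx₀, by rw [div_eq_mul_inv]⟩
    have hsurj : Function.Surjective π := QuotientGroup.mk'_surjective H
    have htop : Subgroup.closure ({π x₀} : Set (G ⧸ H)) = ⊤ := by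
      rw [eq_top_iff, ← MonoidHom.range_eq_top.mpr hsurj, MonoidHom.range_eq_map,
        ← hXgen, MonoidHom.map_closure]
      apply Subgroup.closure_le _ |>.mpr
      rintro c ⟨x, hx, rfl⟩
      rw [hπX x hx]
      exact Subgroup.subset_closure rfl
    have hcomm : ∀ u v : G ⧸ H, Commute u v := by
      intro u v
      have hu : u ∈ Subgroup.zpowers (π x₀) := by
        rw [Subgroup.zpowers_eq_closure, htop]; trivial
      have hv : v ∈ Subgroup.zpowers (π x₀) := by
        rw [Subgroup.zpowers_eq_closure, htop]; trivial
      obtain ⟨m, rfl⟩ := hu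
      obtain ⟨n, rfl⟩ := hv
      exact Commute.zpow_zpow (Commute.refl _) m n
    have : π ⁅a, b⁆ = 1 := by
      rw [map_commutatorElement]
      exact (hcomm (π a) (π b)).commutator_eq
    rwa [QuotientGroup.mk'_apply, QuotientGroup.eq_one_iff] at this
  have heq : _root_.commutator G = H := le_antisymm hle (by
    rw [hHdef]; exact Subgroup.closure_le _ |>.mpr hS_sub)
  refine ⟨?_, heq⟩
  -- Finiteness: center has finite index
  haveI hXfin' : Finite X := hXfin
  haveI : ∀ g : X, Finite (G ⧸ Subgroup.centralizer ({(g : G)} : Set G)) := by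
    intro g
    have e : G ⧸ Subgroup.centralizer ({(g : G)} : Set G) ≃
        orbit (ConjAct G) (g : G) := by exact
      ((MulAction.orbitEquivQuotientStabilizer (ConjAct G) (g : G)).trans
        (Subgroup.quotientEquivOfEq (ConjAct.stabilizer_eq_centralizer (g : G)))).symm
    have horb : (orbit (ConjAct G) (g : G)) ⊆ X := by
      intro h hh
      rw [ConjAct.mem_orbit_conjAct] at hh
      rw [hXmem]
      have hg : IsConj x₀ (g : G) := (hXmem (g : G)).mp g.2
      exact hg.trans hh.symm
    haveI : Finite (orbit (ConjAct G) (g : G)) := (hXfin.subset horb).to_subtype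
    exact Finite.of_equiv _ e.symm
  haveI hfinZ : Finite (G ⧸ Subgroup.center G) := by
    have e := Subgroup.quotientEquivOfEq (Subgroup.center_eq_infi' hXgen)
    have emb := Subgroup.quotientiInfEmbedding
      (fun g : X => Subgroup.centralizer ({(g : G)} : Set G))
    exact Finite.of_injective _ (emb.injective.comp e.injective)
  -- commutatorSet is finite
  haveI : Finite (commutatorSet G) := by
    have hsub : commutatorSet G ⊆
        (fun p : (G ⧸ Subgroup.center G) × (G ⧸ Subgroup.center G) =>
          ⁅p.1.out, p.2.out⁆) '' Set.univ := by
      rintro c ⟨a, b, rfl⟩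
      refine ⟨(QuotientGroup.mk a, QuotientGroup.mk b), Set.mem_univ _, ?_⟩
      obtain ⟨z, hz⟩ := QuotientGroup.mk_out_eq_mul (Subgroup.center G) a
      obtain ⟨w, hw⟩ := QuotientGroup.mk_out_eq_mul (Subgroup.center G) b
      simp only [hz, hw]
      exact commutator_mul_center a b z w z.2 w.2
    exact ((Set.finite_univ.image _).subset hsub).to_subtype
  have : Finite (_root_.commutator G) := inferInstance
  exact Set.toFinite _
end

section
/- Let G be a group generated by a finite conjugacy class X. Then the derived subgroup of G admits the description [G,G] = { x₁ x₂ ⋯ x_n (y₁ y₂ ⋯ y_n)⁻¹ : n ≥ 0, x₁, …, x_n, y₁, …, y_n ∈ X }. -/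
open scoped commutatorElement

/-- Let `G` be a group generated by a finite conjugacy class `X`. Then
`[G,G] = { x₁ ⋯ x_n (y₁ ⋯ y_n)⁻¹ : n ≥ 0, xᵢ, yᵢ ∈ X }`. -/
theorem stmt4 {G : Type*} [Group G] (X : Set G)
    (hXconj : ∃ x : G, X = {y | IsConj x y})
    (hXfin : X.Finite)
    (hXgen : Subgroup.closure X = ⊤) :
    (commutator G : Set G) =
      {g : G | ∃ xs ys : List G, xs.length = ys.length ∧
        (∀ a ∈ xs, a ∈ X) ∧ (∀ a ∈ ys, a ∈ X) ∧ g = xs.prod * ys.prod⁻¹} := by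
  obtain ⟨x₀, hX⟩ := hXconj
  -- X is closed under conjugation
  have hconj : ∀ (g a : G), a ∈ X → g * a * g⁻¹ ∈ X := by
    intro g a ha
    rw [hX] at ha ⊢
    exact ha.trans (isConj_iff.2 ⟨g, rfl⟩)
  -- product of a conjugated list
  have prod_conj : ∀ (g : G) (l : List G),
      (l.map fun a => g * a * g⁻¹).prod = g * l.prod * g⁻¹ := by
    intro g l
    induction l with
    | nil => simp
    | cons h t ih => simp only [List.map_cons, List.prod_cons, ih]; group
  -- the RHS as a subgroup
  set S : Subgroup G :=
    { carrier := {g : G | ∃ xs ys : List G, xs.length = ys.length ∧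
        (∀ a ∈ xs, a ∈ X) ∧ (∀ a ∈ ys, a ∈ X) ∧ g = xs.prod * ys.prod⁻¹}
      one_mem' := ⟨[], [], rfl, by simp, by simp, by simp⟩
      mul_mem' := by
        rintro a b ⟨P, Q, hlen1, hP, hQ, rfl⟩ ⟨R, T, hlen2, hR, hT, rfl⟩
        refine ⟨P ++ R.map (fun r => Q.prod⁻¹ * r * Q.prod⁻¹⁻¹), T ++ Q, ?_, ?_, ?_, ?_⟩
        · simp [hlen1, hlen2, Nat.add_comm]
        · intro a ha
          rcases List.mem_append.1 ha with h | h
          · exact hP a h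
          · obtain ⟨r, hr, rfl⟩ := List.mem_map.1 h
            exact hconj Q.prod⁻¹ r (hR r hr)
        · intro a ha
          rcases List.mem_append.1 ha with h | h
          exacts [hT a h, hQ a h]
        · rw [List.prod_append, List.prod_append, prod_conj]
          group
      inv_mem' := by
        rintro a ⟨P, Q, hlen, hP, hQ, rfl⟩
        exact ⟨Q, P, hlen.symm, hQ, hP, by group⟩ } with hSdef
  have hmemS : ∀ g : G, g ∈ S ↔ ∃ xs ys : List G, xs.length = ys.length ∧
      (∀ a ∈ xs, a ∈ X) ∧ (∀ a ∈ ys, a ∈ X) ∧ g = xs.prod * ys.prod⁻¹ := fun _ => Iff.rfl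
  -- S is normal
  have hSnorm : ∀ (g h : G), h ∈ S → g * h * g⁻¹ ∈ S := by
    rintro g h ⟨P, Q, hlen, hP, hQ, rfl⟩
    refine ⟨P.map (fun a => g * a * g⁻¹), Q.map (fun a => g * a * g⁻¹), by simp [hlen],
      ?_, ?_, ?_⟩
    · intro a ha; obtain ⟨p, hp, rfl⟩ := List.mem_map.1 ha; exact hconj g p (hP p hp)
    · intro a ha; obtain ⟨q, hq, rfl⟩ := List.mem_map.1 ha; exact hconj g q (hQ q hq)
    · rw [prod_conj, prod_conj]; group
  ext g
  constructor
  · -- commutator G ⊆ S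
    intro hg
    -- every commutator ⁅a, b⁆ lies in S
    have key : ∀ a b : G, ⁅a, b⁆ ∈ S := by
      intro a b
      have hb : b ∈ Subgroup.closure X := by rw [hXgen]; trivial
      refine Subgroup.closure_induction (p := fun b _ => ⁅a, b⁆ ∈ S) ?_ ?_ ?_ ?_ hb
      · intro x hx
        refine ⟨[a * x * a⁻¹], [x], rfl, by simpa using hconj a x hx, by simpa using hx, ?_⟩
        simp [commutatorElement_def]
      · simp only [commutatorElement_one_right]; exact S.one_mem
      · intro y z _ _ hy hz
        have : ⁅a, y * z⁆ = ⁅a, y⁆ * (y * ⁅a, z⁆ * y⁻¹) := by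
          simp only [commutatorElement_def]; group
        rw [this]
        exact S.mul_mem hy (hSnorm y _ hz)
      · intro y _ hy
        have : ⁅a, y⁻¹⁆ = y⁻¹ * ⁅a, y⁆⁻¹ * y⁻¹⁻¹ := by
          simp only [commutatorElement_def]; group
        rw [this]
        exact hSnorm y⁻¹ _ (S.inv_mem hy)
    have hle : commutator G ≤ S := by
      rw [commutator_eq_closure, Subgroup.closure_le]
      rintro c ⟨a, b, rfl⟩
      exact key a b
    exact hle hg
  · -- S ⊆ commutator G
    rintro ⟨P, Q, hlen, hP, hQ, rfl⟩
    have hof : ∀ a ∈ X, Abelianization.of a = Abelianization.of x₀ := by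
      intro a ha
      rw [hX] at ha
      obtain ⟨c, rfl⟩ := isConj_iff.1 ha
      simp [map_mul, mul_comm, mul_assoc, mul_left_comm]
    have hone : Abelianization.of (P.prod * Q.prod⁻¹) = 1 := by
      rw [map_mul, map_inv, map_list_prod, map_list_prod,
        List.prod_eq_pow_card (P.map Abelianization.of) (Abelianization.of x₀) ?_,
        List.prod_eq_pow_card (Q.map Abelianization.of) (Abelianization.of x₀) ?_]
      · simp [hlen]
      · intro x hx; obtain ⟨q, hq, rfl⟩ := List.mem_map.1 hx; exact hof q (hQ q hq)
      · intro x hx; obtain ⟨p, hp, rfl⟩ := List.mem_map.1 hx; exact hof p (hP p hp)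
    exact (QuotientGroup.eq_one_iff _).1 hone
end

section
/- Let p be a prime, α ∈ ℤ/pℤ \ {0,1}, G a group, X a conjugacy class of G generating G, and φ : ℤ/pℤ → X a bijection satisfying φ(i)φ(j)φ(i)⁻¹ = φ((1−α)i + αj) for all i, j ∈ ℤ/pℤ. Set g_i = φ(i) for i ∈ ℤ/pℤ and γ = g₀g₁⁻¹. Then the following relations hold in G: (i) g_x g_y⁻¹ = g_{x+z} g_{y+z}⁻¹ for all x, y, z ∈ ℤ/pℤ; (ii) g₀ g_{k mod p}⁻¹ = γ^k for every integer k ≥ 0; (iii) g_x γ = γ^α g_x for all x ∈ ℤ/pℤ (where γ^α means γ raised to any integer representative of α). -/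
/-- Let `p` be a prime, `α ∈ ℤ/pℤ \ {0,1}`, `G` a group, `X` a conjugacy class of
`G` generating `G`, and `φ : ℤ/pℤ → X` a bijection with `φ(i)φ(j)φ(i)⁻¹ = φ((1−α)i + αj)`.
With `gᵢ = φ(i)` and `γ = g₀g₁⁻¹`: (i) `g_x g_y⁻¹ = g_{x+z} g_{y+z}⁻¹`;
(ii) `g₀ g_{k mod p}⁻¹ = γ^k` for every natural number `k`;
(iii) `g_x γ = γ^α g_x` (with `γ^α` meaning `γ` raised to an integer representative of `α`). -/
theorem stmt5 {G : Type*} [Group G] (p : ℕ) (hp : p.Prime)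
    (α : ZMod p) (hα0 : α ≠ 0) (hα1 : α ≠ 1)
    (φ : ZMod p → G) (hφinj : Function.Injective φ)
    (hXconj : ∃ x : G, Set.range φ = {y | IsConj x y})
    (hXgen : Subgroup.closure (Set.range φ) = ⊤)
    (hrack : ∀ i j : ZMod p, φ i * φ j * (φ i)⁻¹ = φ ((1 - α) * i + α * j)) :
    (∀ x y z : ZMod p, φ x * (φ y)⁻¹ = φ (x + z) * (φ (y + z))⁻¹) ∧
    (∀ k : ℕ, φ 0 * (φ (k : ZMod p))⁻¹ = (φ 0 * (φ 1)⁻¹) ^ k) ∧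
    (∀ x : ZMod p, φ x * (φ 0 * (φ 1)⁻¹) = (φ 0 * (φ 1)⁻¹) ^ α.val * φ x) := by
  haveI : Fact p.Prime := ⟨hp⟩
  have hα : (1 : ZMod p) - α ≠ 0 := sub_ne_zero.mpr (Ne.symm hα1)
  -- inverse conjugation
  have hB : ∀ i w : ZMod p, (φ i)⁻¹ * φ w * φ i = φ (α⁻¹ * (w - (1 - α) * i)) := by
    intro i w
    have h1 : (1 - α) * i + α * (α⁻¹ * (w - (1 - α) * i)) = w := by
      field_simp
      ring
    have := hrack i (α⁻¹ * (w - (1 - α) * i))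
    rw [h1] at this
    rw [← this]; group
  -- conjugation by φ x * (φ y)⁻¹ translates indices by (1-α)*(x-y)
  have hconj : ∀ x y w : ZMod p,
      (φ x * (φ y)⁻¹) * φ w * (φ x * (φ y)⁻¹)⁻¹ = φ (w + (1 - α) * (x - y)) := by
    intro x y w
    have h2 := hB y w
    have h3 := hrack x (α⁻¹ * (w - (1 - α) * y))
    calc (φ x * (φ y)⁻¹) * φ w * (φ x * (φ y)⁻¹)⁻¹
        = φ x * ((φ y)⁻¹ * φ w * φ y) * (φ x)⁻¹ := by group
      _ = φ x * φ (α⁻¹ * (w - (1 - α) * y)) * (φ x)⁻¹ := by rw [h2]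
      _ = φ ((1 - α) * x + α * (α⁻¹ * (w - (1 - α) * y))) := h3
      _ = φ (w + (1 - α) * (x - y)) := by
          congr 1
          field_simp
          ring
  -- the basic translation step
  have hT1 : ∀ x y : ZMod p,
      φ x * (φ y)⁻¹
        = φ (x + (1 - α) * (x - y)) * (φ (y + (1 - α) * (x - y)))⁻¹ := by
    intro x y
    have hx := hconj x y x
    have hy := hconj x y y
    calc φ x * (φ y)⁻¹
        = ((φ x * (φ y)⁻¹) * φ x * (φ x * (φ y)⁻¹)⁻¹)
            * ((φ x * (φ y)⁻¹) * φ y * (φ x * (φ y)⁻¹)⁻¹)⁻¹ := by group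
      _ = _ := by rw [hx, hy]
  -- part (i)
  have hi : ∀ x y z : ZMod p, φ x * (φ y)⁻¹ = φ (x + z) * (φ (y + z))⁻¹ := by
    intro x y z
    by_cases hxy : x = y
    · subst hxy; simp
    · have hd : x - y ≠ 0 := sub_ne_zero.mpr hxy
      have he : (1 - α) * (x - y) ≠ 0 := mul_ne_zero hα hd
      set e := (1 - α) * (x - y) with hedef
      have key : ∀ n : ℕ, φ x * (φ y)⁻¹ = φ (x + n * e) * (φ (y + n * e))⁻¹ := by
        intro n
        induction n with
        | zero => simp
        | succ n ih =>
          rw [ih]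
          have hsub : (x + n * e) - (y + n * e) = x - y := by ring
          have := hT1 (x + n * e) (y + n * e)
          rw [hsub, ← hedef] at this
          rw [this]
          have e1 : x + (n : ZMod p) * e + e = x + ((n : ℕ) + 1 : ℕ) * e := by
            push_cast; ring
          have e2 : y + (n : ZMod p) * e + e = y + ((n : ℕ) + 1 : ℕ) * e := by
            push_cast; ring
          rw [e1, e2]
      have hn : ((z * e⁻¹).val : ZMod p) * e = z := by
        rw [ZMod.natCast_val, ZMod.cast_id]
        field_simp
      have := key (z * e⁻¹).val
      rwa [hn] at this
  -- part (ii)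
  have hii : ∀ k : ℕ, φ 0 * (φ (k : ZMod p))⁻¹ = (φ 0 * (φ 1)⁻¹) ^ k := by
    intro k
    induction k with
    | zero => simp
    | succ k ih =>
      have step : φ (k : ZMod p) * (φ ((k : ZMod p) + 1))⁻¹ = φ 0 * (φ 1)⁻¹ := by
        have := hi 0 1 (k : ZMod p)
        rw [zero_add, add_comm 1 (k : ZMod p)] at this
        exact this.symm
      calc φ 0 * (φ ((k + 1 : ℕ) : ZMod p))⁻¹
          = (φ 0 * (φ (k : ZMod p))⁻¹) * (φ (k : ZMod p) * (φ ((k : ZMod p) + 1))⁻¹) := by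
            push_cast; group
        _ = (φ 0 * (φ 1)⁻¹) ^ k * (φ 0 * (φ 1)⁻¹) := by rw [ih, step]
        _ = (φ 0 * (φ 1)⁻¹) ^ (k + 1) := by rw [pow_succ]
  refine ⟨hi, hii, ?_⟩
  -- part (iii)
  intro x
  have h1 : ((α.val : ℕ) : ZMod p) = α := by rw [ZMod.natCast_val, ZMod.cast_id]
  have hγα : (φ 0 * (φ 1)⁻¹) ^ α.val = φ 0 * (φ α)⁻¹ := by
    rw [← hii α.val, h1]
  rw [hγα]
  have h2 := hrack x 0
  have h3 := hrack x 1
  have h4 := hi ((1 - α) * x) ((1 - α) * x + α) (-((1 - α) * x))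
  rw [add_neg_cancel, show (1 - α) * x + α + -((1 - α) * x) = α by ring] at h4
  calc φ x * (φ 0 * (φ 1)⁻¹)
      = (φ x * φ 0 * (φ x)⁻¹) * (φ x * φ 1 * (φ x)⁻¹)⁻¹ * φ x := by group
    _ = φ ((1 - α) * x + α * 0) * (φ ((1 - α) * x + α * 1))⁻¹ * φ x := by rw [h2, h3]
    _ = φ ((1 - α) * x) * (φ ((1 - α) * x + α))⁻¹ * φ x := by
        rw [show (1 - α) * x + α * 0 = (1 - α) * x by ring,
          show (1 - α) * x + α * 1 = (1 - α) * x + α by ring]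
    _ = φ 0 * (φ α)⁻¹ * φ x := by rw [h4]
end

section
/- Let p be a prime, α ∈ ℤ/pℤ \ {0,1}, G a group, X a conjugacy class of G generating G, and φ : ℤ/pℤ → X a bijection satisfying φ(i)φ(j)φ(i)⁻¹ = φ((1−α)i + αj) for all i, j ∈ ℤ/pℤ. Set γ = φ(0)φ(1)⁻¹. Then the derived subgroup [G,G] is cyclic of order p and is generated by γ; in particular γ has order p in G. -/
open scoped commutatorElement


namespace Stmt6Aux

variable {G : Type*} [Group G] {p : ℕ} {φ : ZMod p → G}

/-- The subgroup of elements acting on the image of `φ` by index-translation. -/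
def T (φ : ZMod p → G) : Subgroup G where
  carrier := {g | ∃ v : ZMod p, ∀ m, g * φ m = φ (m + v) * g}
  one_mem' := ⟨0, fun m => by simp⟩
  mul_mem' := by
    rintro a b ⟨v, hv⟩ ⟨w, hw⟩
    refine ⟨w + v, fun m => ?_⟩
    rw [mul_assoc, hw m, ← mul_assoc, hv (m + w), ← add_assoc, mul_assoc]
  inv_mem' := by
    rintro a ⟨v, hv⟩
    refine ⟨-v, fun m => ?_⟩
    have h := hv (m + -v)
    rw [neg_add_cancel_right] at h
    have h2 : φ (m + -v) = a⁻¹ * (φ m * a) := by rw [← h]; group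
    rw [h2]; group

lemma mem_T {g : G} : g ∈ T φ ↔ ∃ v : ZMod p, ∀ m, g * φ m = φ (m + v) * g := Iff.rfl

/-- The translation amount of an element of `T φ`. -/
noncomputable def tr (g : ↥(T φ)) : ZMod p := (mem_T.mp g.2).choose

lemma tr_spec (g : ↥(T φ)) : ∀ m, (g : G) * φ m = φ (m + tr g) * (g : G) :=
  (mem_T.mp g.2).choose_spec

/-- The translation homomorphism. -/
noncomputable def tmap (hinj : Function.Injective φ) :
    ↥(T φ) →* Multiplicative (ZMod p) where
  toFun g := Multiplicative.ofAdd (tr g)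
  map_one' := by
    have h := tr_spec (1 : ↥(T φ)) 0
    simp only [OneMemClass.coe_one, one_mul, mul_one] at h
    have h0 := hinj h
    rw [zero_add] at h0
    show Multiplicative.ofAdd (tr (1 : ↥(T φ))) = 1
    rw [← h0]; rfl
  map_mul' := by
    intro a b
    have h1 : ((a * b : ↥(T φ)) : G) * φ 0 = φ (0 + tr (a * b)) * ((a * b : ↥(T φ)) : G) :=
      tr_spec (a * b) 0
    have h2 : ((a : G) * (b : G)) * φ 0 = φ (0 + tr b + tr a) * ((a : G) * (b : G)) := by
      rw [mul_assoc, tr_spec b 0, ← mul_assoc, tr_spec a (0 + tr b), mul_assoc]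
    rw [Subgroup.coe_mul] at h1
    have h3 := (h1.symm.trans h2)
    have h4 := hinj (mul_right_cancel h3)
    rw [zero_add, zero_add] at h4
    show Multiplicative.ofAdd (tr (a * b)) = Multiplicative.ofAdd (tr a) * Multiplicative.ofAdd (tr b)
    rw [h4, add_comm, ← ofAdd_add]

end Stmt6Aux

/-- Let `p` be a prime, `α ∈ ℤ/pℤ \ {0,1}`, `G` a group, `X` a conjugacy class of
`G` generating `G`, and `φ : ℤ/pℤ → X` a bijection with `φ(i)φ(j)φ(i)⁻¹ = φ((1−α)i + αj)`.
Set `γ = φ(0)φ(1)⁻¹`. Then `[G,G]` is cyclic of order `p` generated by `γ`; in particular `γ`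
has order `p` in `G`. -/
theorem stmt6 {G : Type*} [Group G] (p : ℕ) (hp : p.Prime)
    (α : ZMod p) (hα0 : α ≠ 0) (hα1 : α ≠ 1)
    (φ : ZMod p → G) (hφinj : Function.Injective φ)
    (hXconj : ∃ x : G, Set.range φ = {y | IsConj x y})
    (hXgen : Subgroup.closure (Set.range φ) = ⊤)
    (hrack : ∀ i j : ZMod p, φ i * φ j * (φ i)⁻¹ = φ ((1 - α) * i + α * j)) :
    commutator G = Subgroup.zpowers (φ 0 * (φ 1)⁻¹) ∧
    Nat.card (commutator G) = p ∧
    orderOf (φ 0 * (φ 1)⁻¹) = p := by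
  classical
  haveI : Fact p.Prime := ⟨hp⟩
  have hβ : (1 : ZMod p) - α ≠ 0 := sub_ne_zero.mpr (Ne.symm hα1)
  -- rearranged rack relation
  have hr : ∀ k m : ZMod p, φ k * φ m = φ ((1 - α) * k + α * m) * φ k := by
    intro k m; rw [← hrack k m]; group
  -- conjugation by inverse of a generator
  have hrinv : ∀ k m : ZMod p, (φ k)⁻¹ * φ m = φ (α⁻¹ * (m - (1 - α) * k)) * (φ k)⁻¹ := by
    intro k m
    have hidx : (1 - α) * k + α * (α⁻¹ * (m - (1 - α) * k)) = m := by
      rw [mul_inv_cancel_left₀ hα0]; ring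
    have h := hr k (α⁻¹ * (m - (1 - α) * k))
    rw [hidx] at h
    calc (φ k)⁻¹ * φ m = (φ k)⁻¹ * (φ m * φ k) * (φ k)⁻¹ := by group
      _ = (φ k)⁻¹ * (φ k * φ (α⁻¹ * (m - (1 - α) * k))) * (φ k)⁻¹ := by rw [h]
      _ = φ (α⁻¹ * (m - (1 - α) * k)) * (φ k)⁻¹ := by group
  have hφ0inv : ∀ m : ZMod p, (φ 0)⁻¹ * φ m = φ (α⁻¹ * m) * (φ 0)⁻¹ := by
    intro m
    have h := hrinv 0 m
    rw [show α⁻¹ * (m - (1 - α) * 0) = α⁻¹ * m by ring] at h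
    exact h
  -- every element of G acts affinely on indices
  have haff : ∀ g : G, ∃ u v : ZMod p, u ≠ 0 ∧ ∀ m, g * φ m = φ (u * m + v) * g := by
    intro g
    have hg : g ∈ Subgroup.closure (Set.range φ) := by rw [hXgen]; trivial
    refine Subgroup.closure_induction
      (p := fun g _ => ∃ u v : ZMod p, u ≠ 0 ∧ ∀ m, g * φ m = φ (u * m + v) * g)
      ?_ ?_ ?_ ?_ hg
    · rintro x ⟨k, rfl⟩
      refine ⟨α, (1 - α) * k, hα0, fun m => ?_⟩
      have := hr k m
      rwa [add_comm ((1 - α) * k) (α * m)] at this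
    · exact ⟨1, 0, one_ne_zero, fun m => by simp⟩
    · rintro x y _ _ ⟨u, v, hu, hx⟩ ⟨w, z, hw, hy⟩
      refine ⟨u * w, u * z + v, mul_ne_zero hu hw, fun m => ?_⟩
      calc x * y * φ m = x * (φ (w * m + z) * y) := by rw [mul_assoc, hy m]
        _ = (x * φ (w * m + z)) * y := by rw [mul_assoc]
        _ = φ (u * (w * m + z) + v) * x * y := by rw [hx (w * m + z)]
        _ = φ (u * w * m + (u * z + v)) * (x * y) := by
            rw [show u * (w * m + z) + v = u * w * m + (u * z + v) by ring, mul_assoc]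
    · rintro x _ ⟨u, v, hu, hx⟩
      refine ⟨u⁻¹, -(u⁻¹ * v), inv_ne_zero hu, fun m => ?_⟩
      have hidx : u * (u⁻¹ * m - u⁻¹ * v) + v = m := by
        rw [mul_sub, mul_inv_cancel_left₀ hu, mul_inv_cancel_left₀ hu]; ring
      have h := hx (u⁻¹ * m - u⁻¹ * v)
      rw [hidx] at h
      have h2 : u⁻¹ * m + -(u⁻¹ * v) = u⁻¹ * m - u⁻¹ * v := by ring
      rw [h2]
      calc x⁻¹ * φ m = x⁻¹ * (φ m * x) * x⁻¹ := by group
        _ = x⁻¹ * (x * φ (u⁻¹ * m - u⁻¹ * v)) * x⁻¹ := by rw [h]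
        _ = φ (u⁻¹ * m - u⁻¹ * v) * x⁻¹ := by group
  -- an element commuting with all φ m is central
  have hcentral : ∀ g : G, (∀ m, g * φ m = φ m * g) → ∀ h : G, g * h = h * g := by
    intro g hgφ h
    have hh : h ∈ Subgroup.closure (Set.range φ) := by rw [hXgen]; trivial
    refine Subgroup.closure_induction (p := fun h _ => g * h = h * g) ?_ (by simp) ?_ ?_ hh
    · rintro x ⟨k, rfl⟩; exact hgφ k
    · intro a b _ _ ha hb; rw [← mul_assoc, ha, mul_assoc, hb, mul_assoc]
    · intro a _ ha
      calc g * a⁻¹ = a⁻¹ * (a * g) * a⁻¹ := by group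
        _ = a⁻¹ * (g * a) * a⁻¹ := by rw [ha]
        _ = a⁻¹ * g := by group
  -- T φ is commutative
  have hTcomm : ∀ a b : ↥(Stmt6Aux.T φ), a * b = b * a := by
    apply commutative_of_cyclic_center_quotient (Stmt6Aux.tmap hφinj)
    intro g hg
    have h0 : Multiplicative.ofAdd (Stmt6Aux.tr g) = 1 := hg
    have h1 : Stmt6Aux.tr g = 0 := h0
    have hcm : ∀ m, (g : G) * φ m = φ m * (g : G) := by
      intro m
      have := Stmt6Aux.tr_spec g m
      rwa [h1, add_zero] at this
    rw [Subgroup.mem_center_iff]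
    intro b
    exact Subtype.ext (hcentral (g : G) hcm (b : G)).symm
  -- the c i := φ i * (φ 0)⁻¹ translate indices by (1-α) i
  have hcconj : ∀ k m : ZMod p,
      (φ k * (φ 0)⁻¹) * φ m = φ (m + (1 - α) * k) * (φ k * (φ 0)⁻¹) := by
    intro k m
    have hidx : (1 - α) * k + α * (α⁻¹ * m) = m + (1 - α) * k := by
      rw [mul_inv_cancel_left₀ hα0]; ring
    calc (φ k * (φ 0)⁻¹) * φ m = φ k * (φ (α⁻¹ * m) * (φ 0)⁻¹) := by
          rw [mul_assoc, hφ0inv m]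
      _ = (φ k * φ (α⁻¹ * m)) * (φ 0)⁻¹ := by rw [mul_assoc]
      _ = (φ ((1 - α) * k + α * (α⁻¹ * m)) * φ k) * (φ 0)⁻¹ := by rw [hr]
      _ = φ (m + (1 - α) * k) * (φ k * (φ 0)⁻¹) := by rw [hidx, mul_assoc]
  have hcmemT : ∀ i : ZMod p, (φ i * (φ 0)⁻¹) ∈ Stmt6Aux.T φ := fun i =>
    ⟨(1 - α) * i, fun m => hcconj i m⟩
  have hccomm : ∀ i j : ZMod p,
      (φ i * (φ 0)⁻¹) * (φ j * (φ 0)⁻¹) = (φ j * (φ 0)⁻¹) * (φ i * (φ 0)⁻¹) := by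
    intro i j
    exact congrArg Subtype.val (hTcomm ⟨_, hcmemT i⟩ ⟨_, hcmemT j⟩)
  -- φ(i+j) φ(j)⁻¹ depends only on i
  have hdiff : ∀ i j : ZMod p, φ (i + j) * (φ j)⁻¹ = φ i * (φ 0)⁻¹ := by
    intro i j
    have hk : (1 - α) * ((1 - α)⁻¹ * j) = j := mul_inv_cancel_left₀ hβ j
    have h1 : (φ ((1 - α)⁻¹ * j) * (φ 0)⁻¹) * φ i
        = φ (i + j) * (φ ((1 - α)⁻¹ * j) * (φ 0)⁻¹) := by
      have := hcconj ((1 - α)⁻¹ * j) i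
      rwa [hk] at this
    have h2 : (φ ((1 - α)⁻¹ * j) * (φ 0)⁻¹) * φ 0
        = φ j * (φ ((1 - α)⁻¹ * j) * (φ 0)⁻¹) := by
      have := hcconj ((1 - α)⁻¹ * j) 0
      rwa [zero_add, hk] at this
    set C := φ ((1 - α)⁻¹ * j) * (φ 0)⁻¹ with hC
    have hC0 : C * (φ 0)⁻¹ = (φ j)⁻¹ * C := by
      calc C * (φ 0)⁻¹ = (φ j)⁻¹ * (φ j * C) * (φ 0)⁻¹ := by group
        _ = (φ j)⁻¹ * (C * φ 0) * (φ 0)⁻¹ := by rw [h2]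
        _ = (φ j)⁻¹ * C := by group
    have h3 : C * (φ i * (φ 0)⁻¹) = (φ (i + j) * (φ j)⁻¹) * C := by
      calc C * (φ i * (φ 0)⁻¹) = (C * φ i) * (φ 0)⁻¹ := (mul_assoc C (φ i) (φ 0)⁻¹).symm
        _ = (φ (i + j) * C) * (φ 0)⁻¹ := by rw [h1]
        _ = φ (i + j) * (C * (φ 0)⁻¹) := by rw [mul_assoc]
        _ = φ (i + j) * ((φ j)⁻¹ * C) := by rw [hC0]
        _ = (φ (i + j) * (φ j)⁻¹) * C := by rw [mul_assoc]
    have h4 := hccomm ((1 - α)⁻¹ * j) i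
    exact mul_right_cancel ((h4.symm.trans h3).symm)
  -- additivity
  have hcadd : ∀ i j : ZMod p,
      φ (i + j) * (φ 0)⁻¹ = (φ i * (φ 0)⁻¹) * (φ j * (φ 0)⁻¹) := by
    intro i j
    calc φ (i + j) * (φ 0)⁻¹ = (φ (i + j) * (φ j)⁻¹) * (φ j * (φ 0)⁻¹) := by group
      _ = (φ i * (φ 0)⁻¹) * (φ j * (φ 0)⁻¹) := by rw [hdiff i j]
  have hc0 : φ (0 : ZMod p) * (φ 0)⁻¹ = 1 := by group
  have hcneg : ∀ i : ZMod p, (φ i * (φ 0)⁻¹)⁻¹ = φ (-i) * (φ 0)⁻¹ := by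
    intro i
    have h1 : (φ i * (φ 0)⁻¹) * (φ (-i) * (φ 0)⁻¹) = 1 := by
      rw [← hcadd, add_neg_cancel, hc0]
    exact inv_eq_of_mul_eq_one_right h1
  have hγ : φ 0 * (φ 1)⁻¹ = φ (-1 : ZMod p) * (φ 0)⁻¹ := by
    rw [← hcneg 1]; group
  -- integer powers of γ
  have hzpowZ : ∀ n : ℤ, (φ 0 * (φ 1)⁻¹) ^ n = φ (-(n : ZMod p)) * (φ 0)⁻¹ := by
    intro n
    induction n using Int.induction_on with
    | zero => rw [zpow_zero, Int.cast_zero, neg_zero, hc0]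
    | succ n ih =>
        have hidx : (-(((n : ℤ) + 1 : ℤ) : ZMod p)) = -((n : ℤ) : ZMod p) + -1 := by
          push_cast; ring
        rw [zpow_add_one, ih, hγ, ← hcadd, hidx]
    | pred n ih =>
        have hinv1 : (φ 0 * (φ 1)⁻¹)⁻¹ = φ (1 : ZMod p) * (φ 0)⁻¹ := by group
        have hidx : (-((-(n : ℤ) - 1 : ℤ) : ZMod p)) = -((-(n : ℤ) : ℤ) : ZMod p) + 1 := by
          push_cast; ring
        rw [zpow_sub_one, ih, hinv1, ← hcadd, hidx]
  -- membership of the c i in zpowers γ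
  have hSmem : ∀ i : ZMod p, φ i * (φ 0)⁻¹ ∈ Subgroup.zpowers (φ 0 * (φ 1)⁻¹) := by
    intro i
    obtain ⟨n, hn⟩ := ZMod.intCast_surjective (n := p) (-i)
    refine Subgroup.mem_zpowers_iff.mpr ⟨n, ?_⟩
    rw [hzpowZ n, hn, neg_neg]
  have hSc : ∀ s ∈ Subgroup.zpowers (φ 0 * (φ 1)⁻¹), ∃ i : ZMod p, s = φ i * (φ 0)⁻¹ := by
    intro s hs
    obtain ⟨n, hn⟩ := Subgroup.mem_zpowers_iff.mp hs
    exact ⟨-(n : ZMod p), by rw [← hn, hzpowZ n]⟩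
  -- conjugation of the c i by generators
  have hconjc : ∀ k i : ZMod p,
      φ k * (φ i * (φ 0)⁻¹) * (φ k)⁻¹ = φ (α * i) * (φ 0)⁻¹ := by
    intro k i
    have h1 : φ k * φ i = φ ((1 - α) * k + α * i) * φ k := hr k i
    have h2 : φ k * φ 0 = φ ((1 - α) * k) * φ k := by
      have := hr k 0
      rwa [show (1 - α) * k + α * 0 = (1 - α) * k by ring] at this
    have h3 : (φ 0)⁻¹ * (φ k)⁻¹ = (φ k)⁻¹ * (φ ((1 - α) * k))⁻¹ := by
      rw [← mul_inv_rev, h2, mul_inv_rev]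
    calc φ k * (φ i * (φ 0)⁻¹) * (φ k)⁻¹
        = (φ k * φ i) * ((φ 0)⁻¹ * (φ k)⁻¹) := by group
      _ = (φ ((1 - α) * k + α * i) * φ k) * ((φ k)⁻¹ * (φ ((1 - α) * k))⁻¹) := by
          rw [h1, h3]
      _ = φ (α * i + (1 - α) * k) * (φ ((1 - α) * k))⁻¹ := by
          rw [show (1 - α) * k + α * i = α * i + (1 - α) * k by ring]; group
      _ = φ (α * i) * (φ 0)⁻¹ := hdiff (α * i) ((1 - α) * k)
  have hconjcInv : ∀ k i : ZMod p,
      (φ k)⁻¹ * (φ i * (φ 0)⁻¹) * φ k = φ (α⁻¹ * i) * (φ 0)⁻¹ := by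
    intro k i
    have h := hconjc k (α⁻¹ * i)
    rw [mul_inv_cancel_left₀ hα0] at h
    rw [← h]; group
  -- zpowers γ is normal
  have hSnormal : (Subgroup.zpowers (φ 0 * (φ 1)⁻¹)).Normal := by
    constructor
    intro n hn g
    have hg : g ∈ Subgroup.closure (Set.range φ) := by rw [hXgen]; trivial
    have key : ∀ s ∈ Subgroup.zpowers (φ 0 * (φ 1)⁻¹),
        g * s * g⁻¹ ∈ Subgroup.zpowers (φ 0 * (φ 1)⁻¹) ∧
        g⁻¹ * s * g ∈ Subgroup.zpowers (φ 0 * (φ 1)⁻¹) := by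
      refine Subgroup.closure_induction
        (p := fun g _ => ∀ s ∈ Subgroup.zpowers (φ 0 * (φ 1)⁻¹),
          g * s * g⁻¹ ∈ Subgroup.zpowers (φ 0 * (φ 1)⁻¹) ∧
          g⁻¹ * s * g ∈ Subgroup.zpowers (φ 0 * (φ 1)⁻¹)) ?_ ?_ ?_ ?_ hg
      · rintro x ⟨k, rfl⟩ s hs
        obtain ⟨i, rfl⟩ := hSc s hs
        exact ⟨by rw [hconjc k i]; exact hSmem _, by rw [hconjcInv k i]; exact hSmem _⟩
      · intro s hs
        constructor <;> simpa using hs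
      · intro x y _ _ px py s hs
        constructor
        · have h1 : x * y * s * (x * y)⁻¹ = x * (y * s * y⁻¹) * x⁻¹ := by group
          rw [h1]
          exact (px _ ((py s hs).1)).1
        · have h1 : (x * y)⁻¹ * s * (x * y) = y⁻¹ * (x⁻¹ * s * x) * y := by group
          rw [h1]
          exact (py _ ((px s hs).2)).2
      · intro x _ px s hs
        constructor
        · have h1 : x⁻¹ * s * x⁻¹⁻¹ = x⁻¹ * s * x := by rw [inv_inv]
          rw [h1]; exact (px s hs).2
        · have h1 : x⁻¹⁻¹ * s * x⁻¹ = x * s * x⁻¹ := by rw [inv_inv]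
          rw [h1]; exact (px s hs).1
    exact (key n hn).1
  -- γ is in the commutator subgroup
  have hγmem : φ 0 * (φ 1)⁻¹ ∈ commutator G := by
    obtain ⟨x, hX⟩ := hXconj
    have h0 : IsConj x (φ 0) := by
      have : φ 0 ∈ Set.range φ := ⟨0, rfl⟩
      rwa [hX] at this
    have h1 : IsConj x (φ 1) := by
      have : φ 1 ∈ Set.range φ := ⟨1, rfl⟩
      rwa [hX] at this
    obtain ⟨k, hk⟩ := isConj_iff.mp h0
    obtain ⟨l, hl⟩ := isConj_iff.mp h1
    have hcom : φ 0 * (φ 1)⁻¹ = ⁅k * l⁻¹, φ 1⁆ := by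
      rw [commutatorElement_def, ← hk, ← hl]; group
    rw [hcom, commutator_def]
    exact Subgroup.commutator_mem_commutator (Subgroup.mem_top _) (Subgroup.mem_top _)
  -- commutator ≤ zpowers γ
  have hcommle : commutator G ≤ Subgroup.zpowers (φ 0 * (φ 1)⁻¹) := by
    haveI := hSnormal
    rw [commutator_def, Subgroup.commutator_le]
    intro g _ h _
    have hπ : ∀ g : G, (QuotientGroup.mk g : G ⧸ Subgroup.zpowers (φ 0 * (φ 1)⁻¹))
        ∈ Subgroup.zpowers (QuotientGroup.mk (φ 0) : G ⧸ Subgroup.zpowers (φ 0 * (φ 1)⁻¹)) := by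
      intro g
      have hg : g ∈ Subgroup.closure (Set.range φ) := by rw [hXgen]; trivial
      refine Subgroup.closure_induction
        (p := fun g _ => (QuotientGroup.mk g : G ⧸ Subgroup.zpowers (φ 0 * (φ 1)⁻¹))
          ∈ Subgroup.zpowers (QuotientGroup.mk (φ 0) : G ⧸ Subgroup.zpowers (φ 0 * (φ 1)⁻¹))) ?_ ?_ ?_ ?_ hg
      · rintro x ⟨k, rfl⟩
        have hmem : (φ k)⁻¹ * φ 0 ∈ Subgroup.zpowers (φ 0 * (φ 1)⁻¹) := by
          have h := hconjcInv k (-k)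
          rw [← hcneg k] at h
          have h2 : (φ k)⁻¹ * φ 0 = φ (α⁻¹ * -k) * (φ 0)⁻¹ := by rw [← h]; group
          rw [h2]; exact hSmem _
        have : (QuotientGroup.mk (φ k) : G ⧸ Subgroup.zpowers (φ 0 * (φ 1)⁻¹))
            = QuotientGroup.mk (φ 0) :=
          QuotientGroup.eq.mpr hmem
        rw [this]
        exact Subgroup.mem_zpowers _
      · beta_reduce; rw [QuotientGroup.mk_one]; exact Subgroup.one_mem _
      · intro a b _ _ ha hb; beta_reduce at ha hb ⊢; rw [QuotientGroup.mk_mul]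
        exact Subgroup.mul_mem _ ha hb
      · intro a _ ha; beta_reduce at ha ⊢; rw [QuotientGroup.mk_inv]
        exact Subgroup.inv_mem _ ha
    obtain ⟨m, hm⟩ := Subgroup.mem_zpowers_iff.mp (hπ g)
    obtain ⟨n, hn⟩ := Subgroup.mem_zpowers_iff.mp (hπ h)
    have hcomm : (QuotientGroup.mk g : G ⧸ Subgroup.zpowers (φ 0 * (φ 1)⁻¹)) * QuotientGroup.mk h
        = (QuotientGroup.mk h : G ⧸ Subgroup.zpowers (φ 0 * (φ 1)⁻¹)) * QuotientGroup.mk g := by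
      rw [← hm, ← hn, ← zpow_add, ← zpow_add, add_comm]
    have h1 : (QuotientGroup.mk ⁅g, h⁆ : G ⧸ Subgroup.zpowers (φ 0 * (φ 1)⁻¹)) = 1 := by
      have := map_commutatorElement (QuotientGroup.mk' (Subgroup.zpowers (φ 0 * (φ 1)⁻¹))) g h
      rw [QuotientGroup.mk'_apply] at this
      rw [this]
      exact commutatorElement_eq_one_iff_commute.mpr hcomm
    have h2 : ⁅g, h⁆ ∈ (QuotientGroup.mk' (Subgroup.zpowers (φ 0 * (φ 1)⁻¹))).ker := by
      rw [MonoidHom.mem_ker, QuotientGroup.mk'_apply]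
      exact h1
    rwa [QuotientGroup.ker_mk'] at h2
  -- order of γ
  have hγp : (φ 0 * (φ 1)⁻¹) ^ p = 1 := by
    have h := hzpowZ (p : ℤ)
    rw [zpow_natCast] at h
    rw [h, Int.cast_natCast, ZMod.natCast_self, neg_zero, hc0]
  have hγne : φ 0 * (φ 1)⁻¹ ≠ 1 := by
    intro h
    have h2 : φ 0 = φ 1 := by rwa [mul_inv_eq_one] at h
    have h3 := hφinj h2
    exact zero_ne_one h3
  have hord : orderOf (φ 0 * (φ 1)⁻¹) = p := orderOf_eq_prime hγp hγne
  have heq : commutator G = Subgroup.zpowers (φ 0 * (φ 1)⁻¹) :=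
    le_antisymm hcommle (Subgroup.zpowers_le.mpr hγmem)
  refine ⟨heq, ?_, hord⟩
  rw [heq, Nat.card_zpowers, hord]
end

section
/- Let p be a prime, α ∈ ℤ/pℤ \ {0,1}, G a group, X a conjugacy class of G generating G, and φ : ℤ/pℤ → X a bijection satisfying φ(i)φ(j)φ(i)⁻¹ = φ((1−α)i + αj) for all i, j ∈ ℤ/pℤ. Set γ = φ(0)φ(1)⁻¹ and let β ∈ ℤ/pℤ with β(α−1) = 1. Let k be a field, V a module over the group G (a kG-module), w₀ ∈ V, and λ ∈ k with φ(0) · w₀ = λ w₀. For i ∈ ℤ/pℤ define w_i = γ^{iβ} · w₀ (powers taken via any integer representative of iβ; note γ^p = 1). Then φ(i) · w_j = λ w_{(1−α)i + αj} for all i, j ∈ ℤ/pℤ. -/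
/-- Let `p` be a prime, `α ∈ ℤ/pℤ \ {0,1}`, `G` a group, `X` a conjugacy class of
`G` generating `G`, and `φ : ℤ/pℤ → X` a bijection with `φ(i)φ(j)φ(i)⁻¹ = φ((1−α)i + αj)`.
Set `γ = φ(0)φ(1)⁻¹` and let `β ∈ ℤ/pℤ` with `β(α−1) = 1`. Let `k` be a field, `V` a
`kG`-module, `w₀ ∈ V` and `λ ∈ k` with `φ(0)·w₀ = λ w₀`. Define `w_i = γ^{iβ} · w₀`. Then
`φ(i) · w_j = λ w_{(1−α)i + αj}` for all `i, j ∈ ℤ/pℤ`. -/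
theorem stmt10 {k : Type*} [Field k] {G : Type*} [Group G]
    {V : Type*} [AddCommGroup V] [Module k V]
    (ρ : Representation k G V)
    (p : ℕ) (hp : p.Prime)
    (α : ZMod p) (hα0 : α ≠ 0) (hα1 : α ≠ 1)
    (β : ZMod p) (hβ : β * (α - 1) = 1)
    (φ : ZMod p → G) (hφinj : Function.Injective φ)
    (hXconj : ∃ x : G, Set.range φ = {y | IsConj x y})
    (hXgen : Subgroup.closure (Set.range φ) = ⊤)
    (hrack : ∀ i j : ZMod p, φ i * φ j * (φ i)⁻¹ = φ ((1 - α) * i + α * j))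
    (w₀ : V) (lam : k) (hw₀ : ρ (φ 0) w₀ = lam • w₀)
    (w : ZMod p → V)
    (hw : ∀ i : ZMod p, w i = ρ ((φ 0 * (φ 1)⁻¹) ^ (i * β).val) w₀) :
    ∀ i j : ZMod p, ρ (φ i) (w j) = lam • w ((1 - α) * i + α * j) := by
  haveI : Fact p.Prime := ⟨hp⟩
  set γ : G := φ 0 * (φ 1)⁻¹ with hγ
  -- conjugation by γ shifts indices by α - 1
  have hconj : ∀ j : ZMod p, γ * φ j * γ⁻¹ = φ (j + α - 1) := by
    intro j
    have hm : (1 - α) * 1 + α * (α⁻¹ * (j - 1) + 1) = j := by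
      field_simp
      ring
    have h1 : φ 1 * φ (α⁻¹ * (j - 1) + 1) * (φ 1)⁻¹ = φ j := by
      rw [hrack, hm]
    have h2 : φ 0 * φ (α⁻¹ * (j - 1) + 1) * (φ 0)⁻¹ = φ (j + α - 1) := by
      rw [hrack]
      congr 1
      field_simp
      ring
    calc γ * φ j * γ⁻¹
        = φ 0 * (φ 1)⁻¹ * (φ 1 * φ (α⁻¹ * (j - 1) + 1) * (φ 1)⁻¹) * φ 1 * (φ 0)⁻¹ := by
          rw [h1, hγ]; group
      _ = φ 0 * φ (α⁻¹ * (j - 1) + 1) * (φ 0)⁻¹ := by group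
      _ = φ (j + α - 1) := h2
  -- γ = φ u * (φ (u+1))⁻¹ for every u
  have hstep : ∀ u : ZMod p, φ u * (φ (u + 1))⁻¹ = γ := by
    have hnat : ∀ t : ℕ,
        φ ((t : ZMod p) * (α - 1)) * (φ ((t : ZMod p) * (α - 1) + 1))⁻¹ = γ := by
      intro t
      induction t with
      | zero => simp [hγ]
      | succ t ih =>
        have e1 : γ * φ ((t : ZMod p) * (α - 1)) * γ⁻¹
            = φ (((t : ZMod p) + 1) * (α - 1)) := by
          rw [hconj]; congr 1; ring
        have e2 : γ * φ ((t : ZMod p) * (α - 1) + 1) * γ⁻¹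
            = φ (((t : ZMod p) + 1) * (α - 1) + 1) := by
          rw [hconj]; congr 1; ring
        have key : φ (((t : ZMod p) + 1) * (α - 1)) * (φ (((t : ZMod p) + 1) * (α - 1) + 1))⁻¹
            = γ := by
          rw [← e1, ← e2]
          have : (γ * φ ((t : ZMod p) * (α - 1)) * γ⁻¹)
                * (γ * φ ((t : ZMod p) * (α - 1) + 1) * γ⁻¹)⁻¹
              = γ * (φ ((t : ZMod p) * (α - 1)) * (φ ((t : ZMod p) * (α - 1) + 1))⁻¹) * γ⁻¹ := by
            group
          rw [this, ih]; group
        have hc : (((t + 1 : ℕ)) : ZMod p) = (t : ZMod p) + 1 := by push_cast; ring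
        rw [hc]
        exact key
    intro u
    have h := hnat (u * β).val
    have hc : (((u * β).val : ℕ) : ZMod p) * (α - 1) = u := by
      rw [ZMod.natCast_val, ZMod.cast_id, mul_assoc, hβ, mul_one]
    rw [hc] at h
    exact h
  -- γ ^ n = φ u * (φ (u + n))⁻¹ (telescoping)
  have hpow : ∀ (n : ℕ) (u : ZMod p), γ ^ n = φ u * (φ (u + (n : ZMod p)))⁻¹ := by
    intro n
    induction n with
    | zero => intro u; simp
    | succ n ih =>
      intro u
      have : φ (u + (n : ZMod p)) * (φ (u + (n : ZMod p) + 1))⁻¹ = γ := hstep _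
      calc γ ^ (n + 1) = γ ^ n * γ := by rw [pow_succ]
        _ = (φ u * (φ (u + (n : ZMod p)))⁻¹)
            * (φ (u + (n : ZMod p)) * (φ (u + (n : ZMod p) + 1))⁻¹) := by rw [ih, this]
        _ = φ u * (φ (u + (n : ZMod p) + 1))⁻¹ := by group
        _ = φ u * (φ (u + ((n + 1 : ℕ) : ZMod p)))⁻¹ := by push_cast; ring_nf
  intro i j
  -- abbreviations
  have hval : ∀ x : ZMod p, ((x.val : ℕ) : ZMod p) = x := by
    intro x; rw [ZMod.natCast_val, ZMod.cast_id]
  -- φ i = γ ^ (-i).val * φ 0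
  have hA : γ ^ (-i).val = φ i * (φ 0)⁻¹ := by
    have := hpow (-i).val i
    rw [hval, show i + -i = 0 by ring] at this
    exact this
  have h2 : γ ^ (j * β).val = φ 0 * (φ (j * β))⁻¹ := by
    have := hpow (j * β).val 0
    rw [hval, zero_add] at this
    exact this
  have h3 : γ ^ (α * (j * β)).val = φ 0 * (φ (α * (j * β)))⁻¹ := by
    have := hpow (α * (j * β)).val 0
    rw [hval, zero_add] at this
    exact this
  -- rack relation at 0, j*β
  have h5 : φ 0 * φ (j * β) * (φ 0)⁻¹ = φ (α * (j * β)) := by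
    have := hrack 0 (j * β)
    rwa [show (1 - α) * 0 + α * (j * β) = α * (j * β) by ring] at this
  -- γ ^ M
  have hM : γ ^ (((1 - α) * i + α * j) * β).val
      = γ ^ (-i).val * γ ^ (α * (j * β)).val := by
    rw [← pow_add]
    have c1 := hpow ((((1 - α) * i + α * j) * β).val) 0
    have c2 := hpow ((-i).val + (α * (j * β)).val) 0
    rw [hval, zero_add] at c1
    have hc : (((-i).val + (α * (j * β)).val : ℕ) : ZMod p)
        = ((1 - α) * i + α * j) * β := by
      push_cast
      rw [hval, hval]
      have hβ1 : (1 - α) * β = -1 := by linear_combination -hβ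
      linear_combination (-i) * hβ1
    rw [zero_add, hc] at c2
    rw [c1, c2]
  -- the key group identity
  have key : φ i * γ ^ (j * β).val = γ ^ (((1 - α) * i + α * j) * β).val * φ 0 := by
    rw [hM, hA, h2, h3]
    rw [← h5]
    group
  -- finish
  calc ρ (φ i) (w j)
      = ρ (φ i) (ρ (γ ^ (j * β).val) w₀) := by rw [hw j]
    _ = ρ (φ i * γ ^ (j * β).val) w₀ := by rw [map_mul]; rfl
    _ = ρ (γ ^ (((1 - α) * i + α * j) * β).val * φ 0) w₀ := by rw [key]
    _ = ρ (γ ^ (((1 - α) * i + α * j) * β).val) (ρ (φ 0) w₀) := by rw [map_mul]; rfl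
    _ = lam • ρ (γ ^ (((1 - α) * i + α * j) * β).val) w₀ := by rw [hw₀, map_smul]
    _ = lam • w ((1 - α) * i + α * j) := by rw [hw]
end

section
/- Let p be a prime, α ∈ ℤ/pℤ \ {0,1}, G a group, X a conjugacy class of G generating G, and φ : ℤ/pℤ → X a bijection satisfying φ(i)φ(j)φ(i)⁻¹ = φ((1−α)i + αj) for all i, j ∈ ℤ/pℤ. Set γ = φ(0)φ(1)⁻¹. Let k be a field of characteristic p, and let J be the two-sided ideal of the group algebra kG generated by γ − 1. Then J equals both the left ideal kG(γ − 1) and the right ideal (γ − 1)kG, J^p = 0 (in particular J is nilpotent), and J is a Hopf ideal of kG: Δ(J) ⊆ J ⊗ kG + kG ⊗ J, ε(J) = 0, and S(J) ⊆ J. -/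
open TensorProduct
private lemma aux_main11 {G : Type*} [Group G] {p : ℕ} (hp : p.Prime) {α : ZMod p}
    (hα0 : α ≠ 0) (hα1 : α ≠ 1) (φ : ZMod p → G)
    (hrack : ∀ i j : ZMod p, φ i * φ j * (φ i)⁻¹ = φ ((1 - α) * i + α * j)) :
    (φ 0 * (φ 1)⁻¹) ^ p = 1 ∧
    (∀ i : ZMod p, φ i * (φ 0 * (φ 1)⁻¹) * (φ i)⁻¹ = (φ 0 * (φ 1)⁻¹) ^ α.val) ∧
    (∀ i : ZMod p, (φ i)⁻¹ * (φ 0 * (φ 1)⁻¹) * φ i = (φ 0 * (φ 1)⁻¹) ^ (α⁻¹).val) := by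
  haveI := Fact.mk hp
  haveI : NeZero p := ⟨hp.ne_zero⟩
  set γ := φ 0 * (φ 1)⁻¹ with hγ
  -- inverse rack relation
  have hinv : ∀ i j : ZMod p, (φ i)⁻¹ * φ j * φ i = φ (α⁻¹ * (j - (1 - α) * i)) := by
    intro i j
    have h := hrack i (α⁻¹ * (j - (1 - α) * i))
    have harith : (1 - α) * i + α * (α⁻¹ * (j - (1 - α) * i)) = j := by
      rw [← mul_assoc, mul_inv_cancel₀ hα0, one_mul]; ring
    rw [harith] at h
    rw [← h]; group
  -- conjugation by γ shifts indices by α - 1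
  have hconj1 : ∀ j : ZMod p, γ * φ j * γ⁻¹ = φ (j + (α - 1)) := by
    intro j
    have h1 := hinv 1 j
    have h2 := hrack 0 (α⁻¹ * (j - (1 - α) * 1))
    have harith : (1 - α) * 0 + α * (α⁻¹ * (j - (1 - α) * 1)) = j + (α - 1) := by
      rw [← mul_assoc, mul_inv_cancel₀ hα0, one_mul]; ring
    rw [harith] at h2
    calc γ * φ j * γ⁻¹ = φ 0 * ((φ 1)⁻¹ * φ j * φ 1) * (φ 0)⁻¹ := by rw [hγ]; group
      _ = φ 0 * φ (α⁻¹ * (j - (1 - α) * 1)) * (φ 0)⁻¹ := by rw [h1]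
      _ = φ (j + (α - 1)) := h2
  have hconjk : ∀ (n : ℕ) (j : ZMod p), γ ^ n * φ j * (γ ^ n)⁻¹ = φ (j + n * (α - 1)) := by
    intro n
    induction n with
    | zero => intro j; simp
    | succ n ih =>
      intro j
      have : γ ^ (n+1) * φ j * (γ ^ (n+1))⁻¹ = γ * (γ ^ n * φ j * (γ ^ n)⁻¹) * γ⁻¹ := by group
      rw [this, ih, hconj1]
      congr 1
      push_cast
      ring
  -- all consecutive quotients are equal to γ
  have hdelta : ∀ m : ZMod p, φ m * (φ (m + 1))⁻¹ = γ := by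
    intro m
    have hβ : α - 1 ≠ 0 := sub_ne_zero.mpr hα1
    set n : ℕ := (m * (α - 1)⁻¹).val with hn
    have hk : (n : ZMod p) * (α - 1) = m := by
      rw [hn, ZMod.natCast_val, ZMod.cast_id, mul_assoc, inv_mul_cancel₀ hβ, mul_one]
    have key : γ ^ n * γ * (γ ^ n)⁻¹ = (γ ^ n * φ 0 * (γ ^ n)⁻¹) * (γ ^ n * φ 1 * (γ ^ n)⁻¹)⁻¹ := by
      rw [hγ]; group
    rw [hconjk n 0, hconjk n 1] at key
    have lhs : γ ^ n * γ * (γ ^ n)⁻¹ = γ := by group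
    rw [lhs] at key
    rw [key]
    congr 2
    · rw [← hk]; ring
    · rw [← hk]; ring
  -- telescoping
  have htel : ∀ (a : ZMod p) (n : ℕ), φ a * (φ (a + n))⁻¹ = γ ^ n := by
    intro a n
    induction n with
    | zero => simp
    | succ n ih =>
      have h := hdelta (a + n)
      calc φ a * (φ (a + (n+1 : ℕ)))⁻¹ = (φ a * (φ (a + n))⁻¹) * (φ (a+n) * (φ ((a+n) + 1))⁻¹) := by
            push_cast; group
        _ = γ ^ n * γ := by rw [ih, h]
        _ = γ ^ (n+1) := (pow_succ γ n).symm
  refine ⟨?_, ?_, ?_⟩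
  · have h := htel 0 p
    rw [ZMod.natCast_self, add_zero] at h
    rw [← h]; group
  · intro i
    have h0 := hrack i 0
    have h1 := hrack i 1
    have h := htel ((1-α)*i + α*0) α.val
    have harith : (1-α)*i + α*0 + (α.val : ZMod p) = (1-α)*i + α*1 := by
      rw [ZMod.natCast_val, ZMod.cast_id]; ring
    rw [harith] at h
    calc φ i * γ * (φ i)⁻¹ = (φ i * φ 0 * (φ i)⁻¹) * (φ i * φ 1 * (φ i)⁻¹)⁻¹ := by rw [hγ]; group
      _ = φ ((1-α)*i + α*0) * (φ ((1-α)*i + α*1))⁻¹ := by rw [h0, h1]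
      _ = γ ^ α.val := h
  · intro i
    have h0 := hinv i 0
    have h1 := hinv i 1
    have h := htel (α⁻¹ * (0 - (1-α)*i)) (α⁻¹).val
    have harith : α⁻¹ * (0 - (1-α)*i) + ((α⁻¹).val : ZMod p) = α⁻¹ * (1 - (1-α)*i) := by
      rw [ZMod.natCast_val, ZMod.cast_id]; ring
    rw [harith] at h
    calc (φ i)⁻¹ * γ * φ i = ((φ i)⁻¹ * φ 0 * φ i) * ((φ i)⁻¹ * φ 1 * φ i)⁻¹ := by rw [hγ]; group
      _ = φ (α⁻¹ * (0 - (1-α)*i)) * (φ (α⁻¹ * (1 - (1-α)*i)))⁻¹ := by rw [h0, h1]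
      _ = γ ^ (α⁻¹).val := h

private lemma aux_conj_all11 {G : Type*} [Group G] (γ : G) (Xs : Set G)
    (hXgen : Subgroup.closure Xs = ⊤)
    (hgen : ∀ x ∈ Xs, (∃ n : ℕ, x * γ * x⁻¹ = γ ^ n) ∧ (∃ m : ℕ, x⁻¹ * γ * x = γ ^ m)) :
    ∀ g : G, (∃ n : ℕ, g * γ * g⁻¹ = γ ^ n) ∧ (∃ m : ℕ, g⁻¹ * γ * g = γ ^ m) := by
  intro g
  have hg : g ∈ Subgroup.closure Xs := hXgen ▸ Subgroup.mem_top g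
  induction hg using Subgroup.closure_induction with
  | mem x hx => exact hgen x hx
  | one => exact ⟨⟨1, by simp⟩, ⟨1, by simp⟩⟩
  | mul x y hx hy ihx ihy =>
    obtain ⟨⟨n₁, h₁⟩, ⟨m₁, h₁'⟩⟩ := ihx
    obtain ⟨⟨n₂, h₂⟩, ⟨m₂, h₂'⟩⟩ := ihy
    constructor
    · refine ⟨n₁ * n₂, ?_⟩
      have : (x*y) * γ * (x*y)⁻¹ = x * (y * γ * y⁻¹) * x⁻¹ := by group
      rw [this, h₂, ← conj_pow, h₁, ← pow_mul]
    · refine ⟨m₂ * m₁, ?_⟩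
      have : (x*y)⁻¹ * γ * (x*y) = y⁻¹ * (x⁻¹ * γ * x) * y := by group
      have h3 : y⁻¹ * γ ^ m₁ * y = (y⁻¹ * γ * (y⁻¹)⁻¹) ^ m₁ := by rw [conj_pow]; group
      rw [this, h₁', h3]
      have h4 : y⁻¹ * γ * (y⁻¹)⁻¹ = γ ^ m₂ := by rw [inv_inv]; exact h₂'
      rw [h4, ← pow_mul]
  | inv x hx ihx =>
    obtain ⟨⟨n₁, h₁⟩, ⟨m₁, h₁'⟩⟩ := ihx
    exact ⟨⟨m₁, by simpa using h₁'⟩, ⟨n₁, by simpa using h₁⟩⟩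


/-- The image `P ⊗ Q` of a tensor product of two submodules inside `M ⊗[k] N`. -/
noncomputable def subTensor11 {k : Type*} [CommSemiring k] {M N : Type*}
    [AddCommMonoid M] [Module k M] [AddCommMonoid N] [Module k N]
    (P : Submodule k M) (Q : Submodule k N) : Submodule k (M ⊗[k] N) :=
  LinearMap.range (TensorProduct.map P.subtype Q.subtype)

/-- Let `p` be a prime, `α ∈ ℤ/pℤ \ {0,1}`, `G` a group, `X` a conjugacy class of
`G` generating `G`, and `φ : ℤ/pℤ → X` a bijection with `φ(i)φ(j)φ(i)⁻¹ = φ((1−α)i + αj)`.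
Set `γ = φ(0)φ(1)⁻¹`. Let `k` be a field of characteristic `p` and let `J` be the two-sided
ideal of `kG` generated by `γ − 1`. Then `J = kG(γ−1) = (γ−1)kG`, `J^p = 0` (so `J` is
nilpotent), and `J` is a Hopf ideal: `Δ(J) ⊆ J ⊗ kG + kG ⊗ J`, `ε(J) = 0`, `S(J) ⊆ J`. -/
theorem stmt11 {k : Type*} [Field k] {G : Type*} [Group G]
    (p : ℕ) (hp : p.Prime) [CharP k p]
    (α : ZMod p) (hα0 : α ≠ 0) (hα1 : α ≠ 1)
    (φ : ZMod p → G) (hφinj : Function.Injective φ)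
    (hXconj : ∃ x : G, Set.range φ = {y | IsConj x y})
    (hXgen : Subgroup.closure (Set.range φ) = ⊤)
    (hrack : ∀ i j : ZMod p, φ i * φ j * (φ i)⁻¹ = φ ((1 - α) * i + α * j))
    -- the structure maps of the Hopf algebra kG
    (Δ : MonoidAlgebra k G →ₗ[k] MonoidAlgebra k G ⊗[k] MonoidAlgebra k G)
    (hΔ : ∀ g : G, Δ (MonoidAlgebra.of k G g) =
      MonoidAlgebra.of k G g ⊗ₜ[k] MonoidAlgebra.of k G g)
    (ε : MonoidAlgebra k G →ₗ[k] k)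
    (hε : ∀ g : G, ε (MonoidAlgebra.of k G g) = 1)
    (S : MonoidAlgebra k G →ₗ[k] MonoidAlgebra k G)
    (hS : ∀ g : G, S (MonoidAlgebra.of k G g) = MonoidAlgebra.of k G g⁻¹)
    -- J is the two-sided ideal of kG generated by γ - 1
    (J : Submodule k (MonoidAlgebra k G))
    (hJmem : MonoidAlgebra.of k G (φ 0 * (φ 1)⁻¹) - 1 ∈ J)
    (hJ2 : ∀ x ∈ J, ∀ a : MonoidAlgebra k G, a * x ∈ J ∧ x * a ∈ J)
    (hJmin : ∀ I : Submodule k (MonoidAlgebra k G),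
      MonoidAlgebra.of k G (φ 0 * (φ 1)⁻¹) - 1 ∈ I →
      (∀ x ∈ I, ∀ a : MonoidAlgebra k G, a * x ∈ I ∧ x * a ∈ I) → J ≤ I) :
    (J : Set (MonoidAlgebra k G)) =
        {x | ∃ a : MonoidAlgebra k G, x = a * (MonoidAlgebra.of k G (φ 0 * (φ 1)⁻¹) - 1)} ∧
    (J : Set (MonoidAlgebra k G)) =
        {x | ∃ a : MonoidAlgebra k G, x = (MonoidAlgebra.of k G (φ 0 * (φ 1)⁻¹) - 1) * a} ∧
    J ^ p = ⊥ ∧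
    (∀ x ∈ J, Δ x ∈ subTensor11 J ⊤ ⊔ subTensor11 ⊤ J) ∧
    (∀ x ∈ J, ε x = 0) ∧
    (∀ x ∈ J, S x ∈ J) := by
  haveI := Fact.mk hp
  obtain ⟨hγp, hconjL, hconjR⟩ := aux_main11 hp hα0 hα1 φ hrack
  set γ : G := φ 0 * (φ 1)⁻¹ with hγdef
  have hconjall : ∀ g : G, (∃ n : ℕ, g * γ * g⁻¹ = γ ^ n) ∧ (∃ m : ℕ, g⁻¹ * γ * g = γ ^ m) := by
    apply aux_conj_all11 γ (Set.range φ) hXgen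
    rintro x ⟨i, rfl⟩
    exact ⟨⟨α.val, hconjL i⟩, ⟨(α⁻¹).val, hconjR i⟩⟩
  set c : MonoidAlgebra k G := MonoidAlgebra.of k G γ - 1 with hcdef
  -- basic algebra facts
  haveI : CharP (MonoidAlgebra k G) p :=
    charP_of_injective_algebraMap (algebraMap k (MonoidAlgebra k G)).injective p
  have hofpow : ∀ n : ℕ, (MonoidAlgebra.of k G γ) ^ n = MonoidAlgebra.of k G (γ ^ n) := by
    intro n; rw [map_pow]
  have hcp : c ^ p = 0 := by
    rw [hcdef, sub_pow_char_of_commute p (Commute.one_right _), hofpow, hγp, map_one, one_pow,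
      sub_self]
  -- commuting c past arbitrary elements
  have hA2 : ∀ a : MonoidAlgebra k G, ∃ b, c * a = b * c := by
    intro a
    induction a using MonoidAlgebra.induction_on with
    | of g =>
      obtain ⟨m, hm⟩ := (hconjall g).2
      refine ⟨MonoidAlgebra.of k G g * ∑ i ∈ Finset.range m, (MonoidAlgebra.of k G γ) ^ i, ?_⟩
      have h1 : c * MonoidAlgebra.of k G g =
          MonoidAlgebra.of k G g * ((MonoidAlgebra.of k G γ) ^ m - 1) := by
        rw [hcdef, sub_mul, one_mul, mul_sub, mul_one, hofpow, ← map_mul, ← map_mul, ← hm]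
        congr 2
        group
      rw [h1, mul_assoc, geom_sum_mul]
    | add f g hf hg =>
      obtain ⟨b₁, h₁⟩ := hf; obtain ⟨b₂, h₂⟩ := hg
      exact ⟨b₁ + b₂, by rw [mul_add, h₁, h₂, add_mul]⟩
    | smul r f hf =>
      obtain ⟨b, h⟩ := hf
      exact ⟨r • b, by rw [mul_smul_comm, h, smul_mul_assoc]⟩
  have hA2' : ∀ a : MonoidAlgebra k G, ∃ b, a * c = c * b := by
    intro a
    induction a using MonoidAlgebra.induction_on with
    | of g =>
      obtain ⟨n, hn⟩ := (hconjall g).1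
      refine ⟨(∑ i ∈ Finset.range n, (MonoidAlgebra.of k G γ) ^ i) * MonoidAlgebra.of k G g, ?_⟩
      have h1 : MonoidAlgebra.of k G g * c =
          ((MonoidAlgebra.of k G γ) ^ n - 1) * MonoidAlgebra.of k G g := by
        rw [hcdef, sub_mul, one_mul, mul_sub, mul_one, hofpow, ← map_mul, ← map_mul, ← hn]
        congr 2
        group
      rw [h1, ← mul_geom_sum, mul_assoc]
    | add f g hf hg =>
      obtain ⟨b₁, h₁⟩ := hf; obtain ⟨b₂, h₂⟩ := hg
      exact ⟨b₁ + b₂, by rw [add_mul, h₁, h₂, mul_add]⟩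
    | smul r f hf =>
      obtain ⟨b, h⟩ := hf
      exact ⟨r • b, by rw [smul_mul_assoc, h, mul_smul_comm]⟩
  have hA2pow : ∀ (m : ℕ) (a : MonoidAlgebra k G), ∃ b, c ^ m * a = b * c ^ m := by
    intro m
    induction m with
    | zero => exact fun a => ⟨a, by simp⟩
    | succ m ih =>
      intro a
      obtain ⟨b, hb⟩ := hA2 a
      obtain ⟨b', hb'⟩ := ih b
      refine ⟨b', ?_⟩
      rw [pow_succ, mul_assoc, hb, ← mul_assoc, hb', mul_assoc]
  -- J equals the left ideal and right ideal
  set IL : Submodule k (MonoidAlgebra k G) := LinearMap.range (LinearMap.mulRight k c) with hILdef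
  set IR : Submodule k (MonoidAlgebra k G) := LinearMap.range (LinearMap.mulLeft k c) with hIRdef
  have hILmem : ∀ x : MonoidAlgebra k G, x ∈ IL ↔ ∃ a, x = a * c := by
    intro x
    constructor
    · rintro ⟨a, ha⟩; exact ⟨a, by rw [← ha, LinearMap.mulRight_apply]⟩
    · rintro ⟨a, rfl⟩; exact ⟨a, by rw [LinearMap.mulRight_apply]⟩
  have hIRmem : ∀ x : MonoidAlgebra k G, x ∈ IR ↔ ∃ a, x = c * a := by
    intro x
    constructor
    · rintro ⟨a, ha⟩; exact ⟨a, by rw [← ha, LinearMap.mulLeft_apply]⟩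
    · rintro ⟨a, rfl⟩; exact ⟨a, by rw [LinearMap.mulLeft_apply]⟩
  have hIL2 : ∀ x ∈ IL, ∀ a : MonoidAlgebra k G, a * x ∈ IL ∧ x * a ∈ IL := by
    intro x hx a
    obtain ⟨b, rfl⟩ := (hILmem x).mp hx
    constructor
    · exact (hILmem _).mpr ⟨a * b, by rw [mul_assoc]⟩
    · obtain ⟨b', hb'⟩ := hA2 a
      exact (hILmem _).mpr ⟨b * b', by rw [mul_assoc, hb', ← mul_assoc]⟩
  have hIR2 : ∀ x ∈ IR, ∀ a : MonoidAlgebra k G, a * x ∈ IR ∧ x * a ∈ IR := by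
    intro x hx a
    obtain ⟨b, rfl⟩ := (hIRmem x).mp hx
    constructor
    · obtain ⟨b', hb'⟩ := hA2' a
      exact (hIRmem _).mpr ⟨b' * b, by rw [← mul_assoc, hb', mul_assoc]⟩
    · exact (hIRmem _).mpr ⟨b * a, by rw [mul_assoc]⟩
  have hJIL : J = IL := by
    apply le_antisymm
    · exact hJmin IL ((hILmem _).mpr ⟨1, (one_mul c).symm⟩) hIL2
    · intro x hx
      obtain ⟨a, rfl⟩ := (hILmem x).mp hx
      exact (hJ2 c hJmem a).1
  have hJIR : J = IR := by
    apply le_antisymm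
    · exact hJmin IR ((hIRmem _).mpr ⟨1, (mul_one c).symm⟩) hIR2
    · intro x hx
      obtain ⟨a, rfl⟩ := (hIRmem x).mp hx
      exact (hJ2 c hJmem a).2
  have hJset : ∀ x : MonoidAlgebra k G, x ∈ J ↔ ∃ a, x = a * c := by
    intro x; rw [hJIL]; exact hILmem x
  refine ⟨?_, ?_, ?_, ?_, ?_, ?_⟩
  · ext x; exact hJset x
  · ext x; rw [hJIR]; exact hIRmem x
  · -- J ^ p = ⊥
    have key : ∀ n : ℕ, J ^ (n+1) ≤ LinearMap.range (LinearMap.mulRight k (c ^ (n+1))) := by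
      intro n
      induction n with
      | zero => rw [pow_one, pow_one, hJIL]
      | succ n ih =>
        rw [pow_succ]
        apply Submodule.mul_le.mpr
        intro x hx y hy
        obtain ⟨a, ha⟩ := ih hx
        rw [LinearMap.mulRight_apply] at ha
        obtain ⟨b, rfl⟩ := (hJset y).mp hy
        obtain ⟨b', hb'⟩ := hA2pow (n+1) b
        refine ⟨a * b', ?_⟩
        rw [LinearMap.mulRight_apply, ← ha, pow_succ]
        simp only [mul_assoc]
        congr 1
        rw [← mul_assoc, ← hb', mul_assoc]
    obtain ⟨q, hq⟩ : ∃ q, p = q + 1 := ⟨p - 1, (Nat.succ_pred_eq_of_pos hp.pos).symm⟩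
    apply le_bot_iff.mp
    have hkp : J ^ p ≤ LinearMap.range (LinearMap.mulRight k (c ^ p)) := by
      rw [hq]; exact key q
    refine le_trans hkp ?_
    rintro x ⟨a, ha⟩
    rw [LinearMap.mulRight_apply, hcp, mul_zero] at ha
    simp [← ha]
  · -- Δ
    intro x hx
    obtain ⟨a, rfl⟩ := (hJset x).mp hx
    induction a using MonoidAlgebra.induction_on with
    | of g =>
      have hone : (1 : MonoidAlgebra k G) = MonoidAlgebra.of k G 1 := (map_one _).symm
      have hxval : MonoidAlgebra.of k G g * c =
          MonoidAlgebra.of k G (g * γ) - MonoidAlgebra.of k G g := by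
        rw [hcdef, mul_sub, mul_one, ← map_mul]
      have hmemJ : MonoidAlgebra.of k G (g * γ) - MonoidAlgebra.of k G g ∈ J := by
        rw [← hxval]; exact (hJ2 c hJmem _).1
      rw [hxval, map_sub, hΔ, hΔ]
      have hsplit : MonoidAlgebra.of k G (g*γ) ⊗ₜ[k] MonoidAlgebra.of k G (g*γ) -
          MonoidAlgebra.of k G g ⊗ₜ[k] MonoidAlgebra.of k G g =
          (MonoidAlgebra.of k G (g*γ) - MonoidAlgebra.of k G g) ⊗ₜ[k] MonoidAlgebra.of k G (g*γ)
          + MonoidAlgebra.of k G g ⊗ₜ[k]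
            (MonoidAlgebra.of k G (g*γ) - MonoidAlgebra.of k G g) := by
        rw [TensorProduct.sub_tmul, TensorProduct.tmul_sub]
        abel
      rw [hsplit]
      apply Submodule.add_mem
      · apply Submodule.mem_sup_left
        exact ⟨(⟨_, hmemJ⟩ : J) ⊗ₜ[k] (⟨_, Submodule.mem_top⟩ : (⊤ : Submodule k (MonoidAlgebra k G))),
          by rw [TensorProduct.map_tmul]; rfl⟩
      · apply Submodule.mem_sup_right
        exact ⟨(⟨_, Submodule.mem_top⟩ : (⊤ : Submodule k (MonoidAlgebra k G))) ⊗ₜ[k] (⟨_, hmemJ⟩ : J),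
          by rw [TensorProduct.map_tmul]; rfl⟩
    | add f g hf hg =>
      rw [add_mul, map_add]
      exact Submodule.add_mem _ (hf ((hJset _).mpr ⟨f, rfl⟩)) (hg ((hJset _).mpr ⟨g, rfl⟩))
    | smul r f hf =>
      rw [smul_mul_assoc, map_smul]
      exact Submodule.smul_mem _ r (hf ((hJset _).mpr ⟨f, rfl⟩))
  · -- ε
    intro x hx
    obtain ⟨a, rfl⟩ := (hJset x).mp hx
    induction a using MonoidAlgebra.induction_on with
    | of g =>
      have hxval : MonoidAlgebra.of k G g * c =
          MonoidAlgebra.of k G (g * γ) - MonoidAlgebra.of k G g := by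
        rw [hcdef, mul_sub, mul_one, ← map_mul]
      rw [hxval, map_sub, hε, hε, sub_self]
    | add f g hf hg =>
      rw [add_mul, map_add, hf ((hJset _).mpr ⟨f, rfl⟩), hg ((hJset _).mpr ⟨g, rfl⟩), add_zero]
    | smul r f hf =>
      rw [smul_mul_assoc, map_smul, hf ((hJset _).mpr ⟨f, rfl⟩), smul_zero]
  · -- S
    intro x hx
    obtain ⟨a, rfl⟩ := (hJset x).mp hx
    induction a using MonoidAlgebra.induction_on with
    | of g =>
      have hxval : MonoidAlgebra.of k G g * c =
          MonoidAlgebra.of k G (g * γ) - MonoidAlgebra.of k G g := by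
        rw [hcdef, mul_sub, mul_one, ← map_mul]
      have hSval : S (MonoidAlgebra.of k G g * c) =
          -((MonoidAlgebra.of k G γ⁻¹ * c) * MonoidAlgebra.of k G g⁻¹) := by
        rw [hxval, map_sub, hS, hS, hcdef, mul_sub, mul_one, ← map_mul, inv_mul_cancel,
          map_one, sub_mul, one_mul, ← map_mul, mul_inv_rev, neg_sub]
      rw [hSval]
      apply Submodule.neg_mem
      exact (hJ2 _ ((hJ2 c hJmem (MonoidAlgebra.of k G γ⁻¹)).1) (MonoidAlgebra.of k G g⁻¹)).2
    | add f g hf hg =>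
      rw [add_mul, map_add]
      exact Submodule.add_mem _ (hf ((hJset _).mpr ⟨f, rfl⟩)) (hg ((hJset _).mpr ⟨g, rfl⟩))
    | smul r f hf =>
      rw [smul_mul_assoc, map_smul]
      exact Submodule.smul_mem _ r (hf ((hJset _).mpr ⟨f, rfl⟩))
end

section
/- Let p be a prime, α ∈ ℤ/pℤ \ {0,1}, G a group, X a conjugacy class of G generating G, and φ : ℤ/pℤ → X a bijection satisfying φ(i)φ(j)φ(i)⁻¹ = φ((1−α)i + αj) for all i, j ∈ ℤ/pℤ. Set g₀ = φ(0) and γ = φ(0)φ(1)⁻¹. Let k be a field of characteristic p, let J ⊆ kG be the two-sided ideal generated by γ − 1, and let V be a kG-module generated by a vector v₀ with g₀ · v₀ = λ v₀ for some λ ∈ k. Denote by ᾱ ∈ k the image of α under the ring homomorphism ℤ/pℤ → k. Then for all 0 ≤ j ≤ p − 1: (i) J^j V = kG · ((γ − 1)^j v₀) and J^j V = k(γ − 1)^j v₀ + J^{j+1} V; and (ii) g₀ · ((γ − 1)^j v₀) − λ ᾱ^j (γ − 1)^j v₀ ∈ J^{j+1} V. -/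
/-- The subspace `N V` of a module `V` spanned by products `a • v` with `a` in a subspace `N`
of the acting algebra. -/
def subSMul12 {k : Type*} [CommSemiring k] {A : Type*} [Semiring A] [Algebra k A]
    {V : Type*} [AddCommMonoid V] [Module k V] [Module A V] [IsScalarTower k A V]
    (N : Submodule k A) : Submodule k V :=
  Submodule.span k {w : V | ∃ a ∈ N, ∃ v : V, w = a • v}



lemma st12_trans {G : Type*} [Group G] {p : ℕ} (hp : p.Prime) {α : ZMod p}
    (hα0 : α ≠ 0) (hα1 : α ≠ 1) {φ : ZMod p → G}
    (hrack : ∀ i j : ZMod p, φ i * φ j * (φ i)⁻¹ = φ ((1 - α) * i + α * j)) :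
    ∀ i d : ZMod p, φ i * (φ (i - d))⁻¹ = φ d * (φ 0)⁻¹ := by
  haveI : Fact p.Prime := ⟨hp⟩
  haveI : NeZero p := ⟨hp.ne_zero⟩
  have E1 : ∀ i d : ZMod p, φ i * (φ (i - d))⁻¹ = (φ (i - α * d))⁻¹ * φ i := by
    intro i d
    have h := hrack i (i - d)
    have h2 : (1 - α) * i + α * (i - d) = i - α * d := by ring
    rw [h2] at h
    rw [← h]; group
  have E2 : ∀ i d : ZMod p, φ i * (φ (i - d))⁻¹ = (φ (i - d))⁻¹ * φ (i + (α - 1) * d) := by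
    intro i d
    have h := hrack (i - d) i
    have h2 : (1 - α) * (i - d) + α * i = i + (α - 1) * d := by ring
    rw [h2] at h
    rw [← h]; group
  have step : ∀ (i e : ZMod p), (φ (i - e))⁻¹ * φ i
      = (φ (i + (1 - α⁻¹) * e - e))⁻¹ * φ (i + (1 - α⁻¹) * e) := by
    intro i e
    have h1 := E1 i (α⁻¹ * e)
    have h2 := E2 i (α⁻¹ * e)
    have hae : α * (α⁻¹ * e) = e := by
      rw [← mul_assoc, mul_inv_cancel₀ hα0, one_mul]
    rw [hae] at h1
    have h4 : i + (α - 1) * (α⁻¹ * e) = i + (1 - α⁻¹) * e := by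
      field_simp
    rw [h4] at h2
    have h3 : i + (1 - α⁻¹) * e - e = i - α⁻¹ * e := by ring
    rw [h3, ← h2, h1]
  have const : ∀ (e : ZMod p), e ≠ 0 → ∀ i i' : ZMod p,
      (φ (i - e))⁻¹ * φ i = (φ (i' - e))⁻¹ * φ i' := by
    intro e he i i'
    have h1α : (1 : ZMod p) - α⁻¹ ≠ 0 := by
      intro h
      have : α⁻¹ = 1 := by linear_combination -h
      exact hα1 (by rw [← inv_inv α, this, inv_one])
    have hδ : (1 - α⁻¹) * e ≠ 0 := mul_ne_zero h1α he
    have key : ∀ (n : ℕ) (i : ZMod p), (φ (i - e))⁻¹ * φ i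
        = (φ (i + n • ((1 - α⁻¹) * e) - e))⁻¹ * φ (i + n • ((1 - α⁻¹) * e)) := by
      intro n
      induction n with
      | zero => intro i; simp
      | succ n ih =>
        intro i
        have hidx : i + (n + 1) • ((1 - α⁻¹) * e) = i + n • ((1 - α⁻¹) * e) + (1 - α⁻¹) * e := by
          rw [succ_nsmul]; ring
        rw [hidx, ih i]
        exact step (i + n • ((1 - α⁻¹) * e)) e
    have hkey := key (((i' - i) * ((1 - α⁻¹) * e)⁻¹).val) i
    have hidx : i + (((i' - i) * ((1 - α⁻¹) * e)⁻¹).val) • ((1 - α⁻¹) * e) = i' := by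
      rw [nsmul_eq_mul, ZMod.natCast_val, ZMod.cast_id, mul_assoc,
        inv_mul_cancel₀ hδ, mul_one]
      ring
    rw [hidx] at hkey
    exact hkey
  intro i d
  by_cases hd : d = 0
  · subst hd; simp
  · have had : α * d ≠ 0 := mul_ne_zero hα0 hd
    have h1 := E1 i d
    have h2 := E1 d d
    rw [sub_self] at h2
    rw [h1, const (α * d) had i d, ← h2]

lemma st12_group {G : Type*} [Group G] {p : ℕ} (hp : p.Prime) {α : ZMod p}
    (hα0 : α ≠ 0) (hα1 : α ≠ 1) {φ : ZMod p → G}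
    (hXgen : Subgroup.closure (Set.range φ) = ⊤)
    (hrack : ∀ i j : ZMod p, φ i * φ j * (φ i)⁻¹ = φ ((1 - α) * i + α * j))
    (γ : G) (hγdef : γ = φ 0 * (φ 1)⁻¹) :
    γ ^ p = 1 ∧ (φ 0 * γ * (φ 0)⁻¹ = γ ^ α.val) ∧
    (∀ g : G, ∃ m : ℕ, g * γ * g⁻¹ = γ ^ m) ∧
    (∀ g : G, ∃ m : ℕ, g⁻¹ * γ * g = γ ^ m) ∧
    (∀ g : G, ∃ (m : ℕ) (n : ℤ), g = γ ^ m * (φ 0) ^ n) := by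
  haveI : Fact p.Prime := ⟨hp⟩
  haveI : NeZero p := ⟨hp.ne_zero⟩
  have htrans := st12_trans hp hα0 hα1 hrack
  have hτmul : ∀ d e : ZMod p, φ (d + e) * (φ 0)⁻¹ = (φ d * (φ 0)⁻¹) * (φ e * (φ 0)⁻¹) := by
    intro d e
    have h := htrans (d + e) d
    have h2 : d + e - d = e := by ring
    rw [h2] at h
    rw [← h]; group
  have hτ0 : φ (0 : ZMod p) * (φ 0)⁻¹ = 1 := by group
  have hτpow : ∀ (n : ℕ) (d : ZMod p),
      φ ((n : ZMod p) * d) * (φ 0)⁻¹ = (φ d * (φ 0)⁻¹) ^ n := by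
    intro n
    induction n with
    | zero => intro d; simpa using hτ0
    | succ n ih =>
      intro d
      have h2 : ((n + 1 : ℕ) : ZMod p) * d = (n : ZMod p) * d + d := by push_cast; ring
      rw [h2, hτmul, ih, pow_succ]
  have hγτ : γ = φ (-1 : ZMod p) * (φ 0)⁻¹ := by
    have h := hτmul (-1) 1
    rw [neg_add_cancel, hτ0] at h
    have h1 : φ (-1 : ZMod p) * (φ 0)⁻¹ = (φ 1 * (φ 0)⁻¹)⁻¹ := by
      rw [eq_inv_iff_mul_eq_one]; exact h.symm
    rw [hγdef, h1]; group
  have hτeq : ∀ x : ZMod p, φ x * (φ 0)⁻¹ = γ ^ (-x).val := by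
    intro x
    have h := hτpow ((-x).val) (-1)
    have h2 : (((-x).val : ℕ) : ZMod p) * (-1) = x := by
      rw [ZMod.natCast_val, ZMod.cast_id]; ring
    rw [h2] at h
    rw [h, hγτ]
  have hγp : γ ^ p = 1 := by
    have h := hτpow p (-1)
    have h2 : ((p : ℕ) : ZMod p) * (-1) = 0 := by rw [ZMod.natCast_self]; ring
    rw [h2] at h
    rw [hγτ, ← h, hτ0]
  have hconjτ : ∀ a d : ZMod p, φ a * (φ d * (φ 0)⁻¹) * (φ a)⁻¹ = φ (α * d) * (φ 0)⁻¹ := by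
    intro a d
    have h1 := hrack a d
    have h2 := hrack a 0
    have e2 : (1 - α) * a + α * 0 = (1 - α) * a := by ring
    rw [e2] at h2
    have h2' : φ a * (φ 0)⁻¹ * (φ a)⁻¹ = (φ ((1 - α) * a))⁻¹ := by rw [← h2]; group
    have h3 := htrans ((1 - α) * a + α * d) (α * d)
    have e3 : (1 - α) * a + α * d - α * d = (1 - α) * a := by ring
    rw [e3] at h3
    calc φ a * (φ d * (φ 0)⁻¹) * (φ a)⁻¹
        = (φ a * φ d * (φ a)⁻¹) * (φ a * (φ 0)⁻¹ * (φ a)⁻¹) := by group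
      _ = φ ((1 - α) * a + α * d) * (φ ((1 - α) * a))⁻¹ := by rw [h1, h2']
      _ = φ (α * d) * (φ 0)⁻¹ := h3
  have hconjγ : ∀ a : ZMod p, φ a * γ * (φ a)⁻¹ = γ ^ α.val := by
    intro a
    have h := hconjτ a (-1)
    rw [← hγτ] at h
    rw [h, show α * (-1) = -(α) by ring, hτeq, neg_neg]
  have hconjγ' : ∀ a : ZMod p, (φ a)⁻¹ * γ * φ a = γ ^ (α⁻¹).val := by
    intro a
    have h := hconjτ a (-α⁻¹)
    rw [show α * (-α⁻¹) = -1 by rw [mul_neg, mul_inv_cancel₀ hα0], ← hγτ] at h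
    have h2 := hτeq (-α⁻¹)
    rw [neg_neg] at h2
    rw [h2] at h
    conv_lhs => rw [← h]
    group
  have hz2p : ∀ z : ℤ, ∃ m : ℕ, γ ^ z = γ ^ m := by
    intro z
    refine ⟨(z % p).toNat, ?_⟩
    have hzp : γ ^ (p : ℤ) = 1 := by rw [zpow_natCast, hγp]
    have h1 : z = (p : ℤ) * (z / p) + z % p := (Int.mul_ediv_add_emod z p).symm
    calc γ ^ z = γ ^ ((p : ℤ) * (z / p) + z % p) := by rw [← h1]
      _ = (γ ^ (p : ℤ)) ^ (z / p) * γ ^ (z % p) := by rw [zpow_add, zpow_mul]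
      _ = γ ^ (z % p) := by rw [hzp, one_zpow, one_mul]
      _ = γ ^ (z % p).toNat := by
          rw [← zpow_natCast, Int.toNat_of_nonneg (Int.emod_nonneg z (by exact_mod_cast hp.ne_zero))]
  have hN : ∀ a : ZMod p, φ a ∈ Subgroup.normalizer (Subgroup.zpowers γ : Set G) := by
    intro a
    rw [Subgroup.mem_normalizer_iff]
    intro h
    constructor
    · intro hh
      obtain ⟨z, rfl⟩ := Subgroup.mem_zpowers_iff.mp hh
      have h1 : φ a * γ ^ z * (φ a)⁻¹ = (φ a * γ * (φ a)⁻¹) ^ z := conj_zpow.symm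
      rw [h1, hconjγ a]
      exact Subgroup.mem_zpowers_iff.mpr ⟨(α.val : ℤ) * z, by rw [zpow_mul, zpow_natCast]⟩
    · intro hh
      obtain ⟨z, hz⟩ := Subgroup.mem_zpowers_iff.mp hh
      have hform : h = (φ a)⁻¹ * γ ^ z * φ a := by rw [hz]; group
      have h1 : (φ a)⁻¹ * γ ^ z * φ a = ((φ a)⁻¹ * γ * φ a) ^ z := by
        have h2 := conj_zpow (i := z) (a := (φ a)⁻¹) (b := γ)
        rw [inv_inv] at h2
        exact h2.symm
      rw [hform, h1, hconjγ' a]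
      exact Subgroup.mem_zpowers_iff.mpr ⟨((α⁻¹).val : ℤ) * z, by rw [zpow_mul, zpow_natCast]⟩
  have hNtop : ∀ g : G, g ∈ Subgroup.normalizer (Subgroup.zpowers γ : Set G) := by
    intro g
    have hle : Subgroup.closure (Set.range φ) ≤ Subgroup.normalizer (Subgroup.zpowers γ : Set G) :=
      (Subgroup.closure_le _).mpr (by rintro x ⟨a, rfl⟩; exact hN a)
    exact hle (hXgen.symm ▸ Subgroup.mem_top g)
  have hG1 : ∀ g : G, ∃ m : ℕ, g * γ * g⁻¹ = γ ^ m := by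
    intro g
    have h := (Subgroup.mem_normalizer_iff.mp (hNtop g) γ).mp (Subgroup.mem_zpowers γ)
    obtain ⟨z, hz⟩ := Subgroup.mem_zpowers_iff.mp h
    obtain ⟨m, hm⟩ := hz2p z
    exact ⟨m, by rw [← hz]; exact hm⟩
  have hG2 : ∀ g : G, ∃ m : ℕ, g⁻¹ * γ * g = γ ^ m := by
    intro g
    obtain ⟨m, hm⟩ := hG1 g⁻¹
    rw [inv_inv] at hm
    exact ⟨m, hm⟩
  have hmove : ∀ (x : G) (m : ℕ), ∃ m' : ℕ, x * γ ^ m * x⁻¹ = γ ^ m' := by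
    intro x m
    obtain ⟨m₁, h1⟩ := hG1 x
    refine ⟨m₁ * m, ?_⟩
    calc x * γ ^ m * x⁻¹ = (x * γ * x⁻¹) ^ m := conj_pow.symm
      _ = (γ ^ m₁) ^ m := by rw [h1]
      _ = γ ^ (m₁ * m) := by rw [← pow_mul]
  have hG3 : ∀ g : G, ∃ (m : ℕ) (n : ℤ), g = γ ^ m * (φ 0) ^ n := by
    intro g
    refine Subgroup.closure_induction
      (p := fun x _ => ∃ (m : ℕ) (n : ℤ), x = γ ^ m * (φ 0) ^ n)
      ?_ ?_ ?_ ?_ (hXgen.symm ▸ Subgroup.mem_top g)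
    · rintro x ⟨a, rfl⟩
      refine ⟨(-a).val, 1, ?_⟩
      rw [zpow_one, ← hτeq a]; group
    · exact ⟨0, 0, by simp⟩
    · rintro x y _ _ ⟨m₁, n₁, rfl⟩ ⟨m₂, n₂, rfl⟩
      obtain ⟨m₃, h₃⟩ := hmove ((φ 0) ^ n₁) m₂
      refine ⟨m₁ + m₃, n₁ + n₂, ?_⟩
      have h4 : (φ 0) ^ n₁ * γ ^ m₂ = γ ^ m₃ * (φ 0) ^ n₁ := by rw [← h₃]; group
      calc γ ^ m₁ * (φ 0) ^ n₁ * (γ ^ m₂ * (φ 0) ^ n₂)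
          = γ ^ m₁ * ((φ 0) ^ n₁ * γ ^ m₂) * (φ 0) ^ n₂ := by group
        _ = γ ^ m₁ * (γ ^ m₃ * (φ 0) ^ n₁) * (φ 0) ^ n₂ := by rw [h4]
        _ = γ ^ (m₁ + m₃) * (φ 0) ^ (n₁ + n₂) := by rw [pow_add, zpow_add]; group
    · rintro x _ ⟨m, n, rfl⟩
      obtain ⟨m₁, h₁⟩ := hz2p (-(m : ℤ))
      obtain ⟨m₂, h₂⟩ := hmove ((φ 0) ^ (-n)) m₁
      refine ⟨m₂, -n, ?_⟩
      have hinv : (γ ^ m * (φ 0) ^ n)⁻¹ = (φ 0) ^ (-n) * γ ^ (-(m : ℤ)) := by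
        rw [zpow_neg, zpow_neg, zpow_natCast]; group
      rw [hinv, h₁, ← h₂]; group
  exact ⟨hγp, hconjγ 0, hG1, hG2, hG3⟩



lemma st12_iter {A : Type*} [Ring A] {x c q : A} (hcq : Commute c q)
    (h : x * c = c * q * x) : ∀ j : ℕ, x * c ^ j = c ^ j * q ^ j * x := by
  intro j
  induction j with
  | zero => simp
  | succ j ih =>
    have h1 : q ^ j * c = c * q ^ j := (hcq.pow_right j).symm
    calc x * c ^ (j + 1) = x * c ^ j * c := by rw [pow_succ, mul_assoc]
      _ = c ^ j * q ^ j * x * c := by rw [ih]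
      _ = c ^ j * q ^ j * (c * q * x) := by rw [mul_assoc _ x c, h]
      _ = c ^ (j + 1) * q ^ (j + 1) * x := by
          rw [pow_succ, pow_succ]
          calc c ^ j * q ^ j * (c * q * x) = c ^ j * (q ^ j * c) * (q * x) := by
                simp only [mul_assoc]
            _ = c ^ j * (c * q ^ j) * (q * x) := by rw [h1]
            _ = c ^ j * c * (q ^ j * q) * x := by simp only [mul_assoc]

lemma st12_iter' {A : Type*} [Ring A] {x c q : A} (hcq : Commute c q)
    (h : c * x = x * (c * q)) : ∀ j : ℕ, c ^ j * x = x * (c ^ j * q ^ j) := by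
  intro j
  induction j with
  | zero => simp
  | succ j ih =>
    have h1 : q * c ^ j = c ^ j * q := hcq.symm.pow_right j
    calc c ^ (j + 1) * x = c * (c ^ j * x) := by rw [pow_succ', mul_assoc]
      _ = c * (x * (c ^ j * q ^ j)) := by rw [ih]
      _ = (c * x) * (c ^ j * q ^ j) := by simp only [mul_assoc]
      _ = x * (c * q) * (c ^ j * q ^ j) := by rw [h]
      _ = x * (c ^ (j + 1) * q ^ (j + 1)) := by
          rw [pow_succ', pow_succ']
          calc x * (c * q) * (c ^ j * q ^ j) = x * (c * (q * c ^ j) * q ^ j) := by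
                simp only [mul_assoc]
            _ = x * (c * (c ^ j * q) * q ^ j) := by rw [h1]
            _ = x * (c * c ^ j * (q * q ^ j)) := by simp only [mul_assoc]

lemma st12_pc_mul {k : Type*} [CommRing k] {A : Type*} [Ring A] [Algebra k A] (c : A)
    {μ ν : k} {x y : A}
    (hx : ∃ t, Commute c t ∧ x = μ • 1 + c * t)
    (hy : ∃ t, Commute c t ∧ y = ν • 1 + c * t) :
    ∃ t, Commute c t ∧ x * y = (μ * ν) • 1 + c * t := by
  obtain ⟨t, hct, rfl⟩ := hx
  obtain ⟨s, hcs, rfl⟩ := hy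
  refine ⟨μ • s + ν • t + t * (c * s), ?_, ?_⟩
  · exact ((hcs.smul_right μ).add_right (hct.smul_right ν)).add_right
      (hct.mul_right ((Commute.refl c).mul_right hcs))
  · simp only [add_mul, mul_add, smul_mul_assoc, mul_smul_comm, one_mul, mul_one,
      smul_smul, smul_add, mul_assoc, add_assoc]
    rw [mul_comm ν μ]
    abel

lemma st12_pc_pow {k : Type*} [CommRing k] {A : Type*} [Ring A] [Algebra k A] (c : A)
    {μ : k} {x : A} (hx : ∃ t, Commute c t ∧ x = μ • 1 + c * t) :
    ∀ n : ℕ, ∃ t, Commute c t ∧ x ^ n = (μ ^ n) • 1 + c * t := by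
  intro n
  induction n with
  | zero => exact ⟨0, Commute.zero_right c, by simp⟩
  | succ n ih =>
    obtain ⟨t, h1, h2⟩ := st12_pc_mul c ih hx
    exact ⟨t, h1, by rw [pow_succ, h2, ← pow_succ]⟩

lemma st12_geom {k : Type*} [CommRing k] {A : Type*} [Ring A] [Algebra k A] (c : A) :
    ∀ m : ℕ, ∃ q : A, (∃ t, Commute c t ∧ q = (m : k) • 1 + c * t) ∧
      (1 + c) ^ m = 1 + c * q := by
  intro m
  induction m with
  | zero => exact ⟨0, ⟨0, Commute.zero_right c, by simp⟩, by simp⟩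
  | succ m ih =>
    obtain ⟨q, ⟨t, hct, hq⟩, hpow⟩ := ih
    refine ⟨q * (1 + c) + 1, ⟨t + (m : k) • 1 + t * c, ?_, ?_⟩, ?_⟩
    · exact (hct.add_right ((Commute.one_right c).smul_right (m : k))).add_right
        (hct.mul_right (Commute.refl c))
    · rw [hq]
      push_cast
      simp only [add_mul, mul_add, smul_mul_assoc, mul_smul_comm, one_mul, mul_one,
        add_smul, one_smul, mul_assoc, add_assoc]
      abel
    · rw [pow_succ, hpow]
      noncomm_ring

/-- Let `p` be a prime, `α ∈ ℤ/pℤ \ {0,1}`, `G` a group, `X` a conjugacy class of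
`G` generating `G`, and `φ : ℤ/pℤ → X` a bijection with `φ(i)φ(j)φ(i)⁻¹ = φ((1−α)i + αj)`.
Set `g₀ = φ(0)`, `γ = φ(0)φ(1)⁻¹`. Let `k` be a field of characteristic `p`, `J ⊆ kG` the
two-sided ideal generated by `γ − 1`, and `V` a `kG`-module generated by `v₀` with
`g₀ · v₀ = λ v₀`. Let `ᾱ ∈ k` be the image of `α`. Then for all `0 ≤ j ≤ p − 1`:
(i) `J^j V = kG·((γ−1)^j v₀)` and `J^j V = k(γ−1)^j v₀ + J^{j+1} V`;
(ii) `g₀·((γ−1)^j v₀) − λ ᾱ^j (γ−1)^j v₀ ∈ J^{j+1} V`. -/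
theorem stmt12 {k : Type*} [Field k] {G : Type*} [Group G]
    (p : ℕ) (hp : p.Prime) [CharP k p]
    (α : ZMod p) (hα0 : α ≠ 0) (hα1 : α ≠ 1)
    (φ : ZMod p → G) (hφinj : Function.Injective φ)
    (hXconj : ∃ x : G, Set.range φ = {y | IsConj x y})
    (hXgen : Subgroup.closure (Set.range φ) = ⊤)
    (hrack : ∀ i j : ZMod p, φ i * φ j * (φ i)⁻¹ = φ ((1 - α) * i + α * j))
    -- J is the two-sided ideal of kG generated by γ - 1
    (J : Submodule k (MonoidAlgebra k G))
    (hJmem : MonoidAlgebra.of k G (φ 0 * (φ 1)⁻¹) - 1 ∈ J)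
    (hJ2 : ∀ x ∈ J, ∀ a : MonoidAlgebra k G, a * x ∈ J ∧ x * a ∈ J)
    (hJmin : ∀ I : Submodule k (MonoidAlgebra k G),
      MonoidAlgebra.of k G (φ 0 * (φ 1)⁻¹) - 1 ∈ I →
      (∀ x ∈ I, ∀ a : MonoidAlgebra k G, a * x ∈ I ∧ x * a ∈ I) → J ≤ I)
    -- V is a kG-module generated by v₀, with g₀ • v₀ = λ v₀
    {V : Type*} [AddCommGroup V] [Module k V] [Module (MonoidAlgebra k G) V]
    [IsScalarTower k (MonoidAlgebra k G) V]
    (v₀ : V) (hcyc : Submodule.span (MonoidAlgebra k G) {v₀} = ⊤)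
    (lam : k) (hv₀ : MonoidAlgebra.of k G (φ 0) • v₀ = lam • v₀) :
    ∀ j : ℕ, j ≤ p - 1 →
      (subSMul12 (V := V) (J ^ j) =
        Submodule.restrictScalars k (Submodule.span (MonoidAlgebra k G)
          {(MonoidAlgebra.of k G (φ 0 * (φ 1)⁻¹) - 1) ^ j • v₀})) ∧
      (subSMul12 (V := V) (J ^ j) =
        Submodule.span k {(MonoidAlgebra.of k G (φ 0 * (φ 1)⁻¹) - 1) ^ j • v₀} ⊔
          subSMul12 (V := V) (J ^ (j + 1))) ∧
      (MonoidAlgebra.of k G (φ 0) • ((MonoidAlgebra.of k G (φ 0 * (φ 1)⁻¹) - 1) ^ j • v₀) -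
          (lam * (ZMod.castHom (dvd_refl p) k α) ^ j) •
            ((MonoidAlgebra.of k G (φ 0 * (φ 1)⁻¹) - 1) ^ j • v₀)
        ∈ subSMul12 (V := V) (J ^ (j + 1))) := by
  haveI : Fact p.Prime := ⟨hp⟩
  haveI : NeZero p := ⟨hp.ne_zero⟩
  obtain ⟨hγp, hconj0, hG1, hG2, hG3⟩ :=
    st12_group hp hα0 hα1 hXgen hrack (φ 0 * (φ 1)⁻¹) rfl
  set γ : G := φ 0 * (φ 1)⁻¹ with hγdef
  set c : MonoidAlgebra k G := MonoidAlgebra.of k G γ - 1 with hcdef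
  clear_value c
  clear_value γ
  have hec : MonoidAlgebra.of k G γ = 1 + c := by rw [hcdef]; noncomm_ring
  have hpc_comm : ∀ {ν : k} {q : MonoidAlgebra k G},
      (∃ t, Commute c t ∧ q = ν • 1 + c * t) → Commute c q := by
    rintro ν q ⟨t, hct, rfl⟩
    exact ((Commute.one_right c).smul_right ν).add_right ((Commute.refl c).mul_right hct)
  -- commutation of c past group elements
  have hGc : ∀ g : G, ∃ (m : ℕ) (q : MonoidAlgebra k G),
      (∃ t, Commute c t ∧ q = (m : k) • 1 + c * t) ∧
      MonoidAlgebra.of k G g * c = c * q * MonoidAlgebra.of k G g := by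
    intro g
    obtain ⟨m, hm⟩ := hG1 g
    obtain ⟨q, hqpc, hq⟩ := st12_geom (k := k) c m
    have h1 : g * γ = γ ^ m * g := by rw [← hm]; group
    refine ⟨m, q, hqpc, ?_⟩
    calc MonoidAlgebra.of k G g * c
        = MonoidAlgebra.of k G g * MonoidAlgebra.of k G γ - MonoidAlgebra.of k G g := by
          rw [hec]; noncomm_ring
      _ = MonoidAlgebra.of k G (g * γ) - MonoidAlgebra.of k G g := by rw [map_mul]
      _ = MonoidAlgebra.of k G (γ ^ m * g) - MonoidAlgebra.of k G g := by rw [h1]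
      _ = (1 + c) ^ m * MonoidAlgebra.of k G g - MonoidAlgebra.of k G g := by
          rw [map_mul, map_pow, hec]
      _ = ((1 + c) ^ m - 1) * MonoidAlgebra.of k G g := by noncomm_ring
      _ = c * q * MonoidAlgebra.of k G g := by rw [hq]; noncomm_ring
  have hcG : ∀ g : G, ∃ q, Commute c q ∧
      c * MonoidAlgebra.of k G g = MonoidAlgebra.of k G g * (c * q) := by
    intro g
    obtain ⟨m, hm⟩ := hG2 g
    obtain ⟨q, hqpc, hq⟩ := st12_geom (k := k) c m
    have h1 : γ * g = g * γ ^ m := by rw [← hm]; group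
    refine ⟨q, hpc_comm hqpc, ?_⟩
    calc c * MonoidAlgebra.of k G g
        = MonoidAlgebra.of k G (γ * g) - MonoidAlgebra.of k G g := by rw [map_mul, hec]; noncomm_ring
      _ = MonoidAlgebra.of k G (g * γ ^ m) - MonoidAlgebra.of k G g := by rw [h1]
      _ = MonoidAlgebra.of k G g * ((1 + c) ^ m - 1) := by rw [map_mul, map_pow, hec]; noncomm_ring
      _ = MonoidAlgebra.of k G g * (c * q) := by rw [hq]; noncomm_ring
  have hC1 : ∀ (jj : ℕ) (d : MonoidAlgebra k G), ∃ y, c ^ jj * d = y * c ^ jj := by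
    intro jj d
    induction d using MonoidAlgebra.induction_on with
    | of g =>
      obtain ⟨q, hcq, hcg⟩ := hcG g
      have h := st12_iter' hcq hcg jj
      exact ⟨MonoidAlgebra.of k G g * q ^ jj, by rw [h, (hcq.pow_pow jj jj).eq, ← mul_assoc]⟩
    | add f g hf hg =>
      obtain ⟨y1, h1⟩ := hf; obtain ⟨y2, h2⟩ := hg
      exact ⟨y1 + y2, by rw [mul_add, h1, h2, add_mul]⟩
    | smul r f hf =>
      obtain ⟨y, h⟩ := hf
      exact ⟨r • y, by rw [mul_smul_comm, h, smul_mul_assoc]⟩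
  -- characterization of J and its powers
  have hJchar : ∀ x ∈ J, ∃ a : MonoidAlgebra k G, x = a * c := by
    have hIle := hJmin (LinearMap.range (LinearMap.mulRight k c)) ⟨1, one_mul c⟩ ?_
    · intro x hx
      obtain ⟨a, ha⟩ := hIle hx
      exact ⟨a, ha.symm⟩
    · rintro x ⟨b, rfl⟩ a
      constructor
      · exact ⟨a * b, by simp [mul_assoc]⟩
      · obtain ⟨y, hy⟩ := hC1 1 a
        rw [pow_one] at hy
        refine ⟨b * y, ?_⟩
        simp only [LinearMap.mulRight_apply]
        rw [mul_assoc, ← hy, ← mul_assoc]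
  have hD1 : ∀ jj : ℕ, ∀ x ∈ J ^ (jj + 1), ∃ a, x = a * c ^ (jj + 1) := by
    intro jj
    induction jj with
    | zero =>
      intro x hx
      rw [pow_one] at hx
      obtain ⟨a, ha⟩ := hJchar x hx
      exact ⟨a, by rw [pow_one]; exact ha⟩
    | succ n ih =>
      intro x hx
      rw [pow_succ] at hx
      refine Submodule.mul_induction_on hx ?_ ?_
      · intro m hm n' hn'
        obtain ⟨b, rfl⟩ := ih m hm
        obtain ⟨d, rfl⟩ := hJchar n' hn'
        obtain ⟨y, hy⟩ := hC1 (n + 1) d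
        refine ⟨b * y, ?_⟩
        rw [pow_succ]
        calc b * c ^ (n + 1) * (d * c) = b * (c ^ (n + 1) * d) * c := by
              simp only [mul_assoc]
          _ = b * (y * c ^ (n + 1)) * c := by rw [hy]
          _ = b * y * (c ^ (n + 1) * c) := by simp only [mul_assoc]
      · rintro x y ⟨a1, rfl⟩ ⟨a2, rfl⟩
        exact ⟨a1 + a2, (add_mul _ _ _).symm⟩
  have hD2 : ∀ (jj : ℕ) (a : MonoidAlgebra k G), a * c ^ (jj + 1) ∈ J ^ (jj + 1) := by
    intro jj
    induction jj with
    | zero => intro a; rw [pow_one, pow_one]; exact (hJ2 c hJmem a).1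
    | succ n ih =>
      intro a
      rw [pow_succ, pow_succ c]
      have h := Submodule.mul_mem_mul (ih a) hJmem
      rwa [← mul_assoc]
  -- scalar commuting helper
  have hsc : ∀ (r : k) (a : MonoidAlgebra k G) (v : V), a • (r • v) = r • (a • v) := by
    intro r a v
    calc a • (r • v) = a • ((r • (1 : MonoidAlgebra k G)) • v) := by rw [smul_assoc, one_smul]
      _ = (a * (r • 1)) • v := by rw [mul_smul]
      _ = (r • a) • v := by rw [mul_smul_comm, mul_one]
      _ = r • (a • v) := by rw [smul_assoc]
  -- action of powers of φ 0 on v₀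
  have hstar : ∀ n : ℤ, MonoidAlgebra.of k G ((φ 0) ^ n) • v₀ = lam ^ n • v₀ := by
    by_cases hlam : lam = 0
    · have hv0 : v₀ = 0 := by
        have h1 : MonoidAlgebra.of k G ((φ 0)⁻¹) • (MonoidAlgebra.of k G (φ 0) • v₀) = v₀ := by
          rw [← mul_smul, ← map_mul, inv_mul_cancel, map_one, one_smul]
        rw [hv₀, hlam, zero_smul, smul_zero] at h1
        exact h1.symm
      intro n; rw [hv0, smul_zero, smul_zero]
    · have hneg1 : MonoidAlgebra.of k G ((φ 0)⁻¹) • v₀ = lam⁻¹ • v₀ := by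
        have h1 : MonoidAlgebra.of k G ((φ 0)⁻¹) • (MonoidAlgebra.of k G (φ 0) • v₀) = v₀ := by
          rw [← mul_smul, ← map_mul, inv_mul_cancel, map_one, one_smul]
        rw [hv₀, hsc] at h1
        calc MonoidAlgebra.of k G ((φ 0)⁻¹) • v₀
            = (lam⁻¹ * lam) • (MonoidAlgebra.of k G ((φ 0)⁻¹) • v₀) := by
              rw [inv_mul_cancel₀ hlam, one_smul]
          _ = lam⁻¹ • (lam • (MonoidAlgebra.of k G ((φ 0)⁻¹) • v₀)) := by rw [mul_smul]
          _ = lam⁻¹ • v₀ := by rw [h1]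
      intro n
      induction n using Int.induction_on with
      | zero => rw [zpow_zero, zpow_zero, map_one, one_smul, one_smul]
      | succ n ih =>
        rw [zpow_add_one, map_mul, mul_smul, hv₀, hsc, ih, zpow_add_one₀ hlam, smul_smul,
          mul_comm]
      | pred n ih =>
        have hx : (φ 0 : G) ^ (-(n : ℤ) - 1) = (φ 0) ^ (-(n : ℤ)) * (φ 0)⁻¹ := by
          rw [zpow_sub_one]
        rw [hx, map_mul, mul_smul, hneg1, hsc, ih, zpow_sub_one₀ hlam, smul_smul, mul_comm]
  -- master decomposition lemma
  have hMaster : ∀ (jj : ℕ) (g : G), ∃ (μ : k) (w : MonoidAlgebra k G),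
      (MonoidAlgebra.of k G g * c ^ jj) • v₀ =
        μ • (c ^ jj • v₀) + (w * c ^ (jj + 1)) • v₀ := by
    intro jj g
    obtain ⟨m, n, rfl⟩ := hG3 g
    obtain ⟨m', q, hqpc, hgc⟩ := hGc ((φ 0) ^ n)
    have hcq : Commute c q := hpc_comm hqpc
    have h1 := st12_iter hcq hgc jj
    have hpc1 : ∃ t, Commute c t ∧ MonoidAlgebra.of k G γ = (1 : k) • 1 + c * t :=
      ⟨1, Commute.one_right c, by rw [hec]; simp⟩
    obtain ⟨t, hct, hZeq⟩ := st12_pc_mul c (st12_pc_pow c hpc1 m) (st12_pc_pow c hqpc jj)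
    have h2 : MonoidAlgebra.of k G (γ ^ m * (φ 0) ^ n) * c ^ jj =
        ((MonoidAlgebra.of k G γ) ^ m * q ^ jj * c ^ jj) * MonoidAlgebra.of k G ((φ 0) ^ n) := by
      rw [map_mul, map_pow, mul_assoc, h1, (hcq.pow_pow jj jj).eq]
      simp only [mul_assoc]
    have h3 : (MonoidAlgebra.of k G γ) ^ m * q ^ jj * c ^ jj =
        ((1 : k) ^ m * m' ^ jj) • c ^ jj + t * c ^ (jj + 1) := by
      have hA : c * t * c ^ jj = t * c ^ (jj + 1) := by
        rw [hct.eq, mul_assoc, ← pow_succ']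
      rw [hZeq, add_mul, smul_mul_assoc, one_mul, hA]
    refine ⟨lam ^ n * ((1 : k) ^ m * (m' : k) ^ jj), lam ^ n • t, ?_⟩
    rw [h2, mul_smul, hstar n, hsc, h3, add_smul, smul_add]
    simp only [smul_assoc, smul_mul_assoc, smul_smul]
  -- the three statements, proved for all j
  have hS0top : subSMul12 (V := V) (J ^ 0) = ⊤ := by
    rw [eq_top_iff]
    intro v _
    exact Submodule.subset_span ⟨1, by rw [pow_zero]; exact Submodule.one_le.mp le_rfl,
      v, (one_smul _ v).symm⟩
  have hSW : ∀ jj : ℕ, subSMul12 (V := V) (J ^ jj) =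
      Submodule.restrictScalars k (Submodule.span (MonoidAlgebra k G) {c ^ jj • v₀}) := by
    intro jj
    cases jj with
    | zero =>
      rw [hS0top, pow_zero, one_smul, hcyc]
      rfl
    | succ n =>
      apply le_antisymm
      · have hspan : subSMul12 (V := V) (J ^ (n + 1)) = Submodule.span k
            {w : V | ∃ a ∈ J ^ (n + 1), ∃ v : V, w = a • v} := rfl
        rw [hspan, Submodule.span_le]
        rintro w ⟨a, ha, v, rfl⟩
        obtain ⟨b, rfl⟩ := hD1 n a ha
        have hv : v ∈ Submodule.span (MonoidAlgebra k G) {v₀} := by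
          rw [hcyc]; exact Submodule.mem_top
        obtain ⟨d, rfl⟩ := Submodule.mem_span_singleton.mp hv
        obtain ⟨y, hy⟩ := hC1 (n + 1) d
        have heq : (b * c ^ (n + 1)) • d • v₀ = (b * y) • (c ^ (n + 1) • v₀) := by
          rw [← mul_smul, ← mul_smul, mul_assoc, hy, ← mul_assoc]
        show (b * c ^ (n + 1)) • d • v₀ ∈
          Submodule.span (MonoidAlgebra k G) {c ^ (n + 1) • v₀}
        rw [heq]
        exact Submodule.smul_mem _ _ (Submodule.mem_span_singleton_self _)
      · intro x hx
        have hx' : x ∈ Submodule.span (MonoidAlgebra k G) {c ^ (n + 1) • v₀} := hx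
        obtain ⟨d, rfl⟩ := Submodule.mem_span_singleton.mp hx'
        exact Submodule.subset_span ⟨d * c ^ (n + 1), hD2 n d, v₀, (mul_smul _ _ _).symm⟩
  have hSsup : ∀ jj : ℕ, subSMul12 (V := V) (J ^ jj) =
      Submodule.span k {c ^ jj • v₀} ⊔ subSMul12 (V := V) (J ^ (jj + 1)) := by
    intro jj
    have hsub : ∀ d : MonoidAlgebra k G, (d * c ^ jj) • v₀ ∈
        Submodule.span k {c ^ jj • v₀} ⊔ subSMul12 (V := V) (J ^ (jj + 1)) := by
      intro d
      induction d using MonoidAlgebra.induction_on with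
      | of g =>
        obtain ⟨μ, w, hw⟩ := hMaster jj g
        rw [hw]
        exact Submodule.add_mem _
          (Submodule.mem_sup_left (Submodule.smul_mem _ μ (Submodule.mem_span_singleton_self _)))
          (Submodule.mem_sup_right (Submodule.subset_span ⟨w * c ^ (jj + 1), hD2 jj w, v₀, rfl⟩))
      | add f g hf hg =>
        rw [add_mul, add_smul]
        exact Submodule.add_mem _ hf hg
      | smul r f hf =>
        rw [smul_mul_assoc, smul_assoc]
        exact Submodule.smul_mem _ r hf
    apply le_antisymm
    · rw [hSW jj]
      intro x hx
      have hx' : x ∈ Submodule.span (MonoidAlgebra k G) {c ^ jj • v₀} := hx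
      obtain ⟨d, rfl⟩ := Submodule.mem_span_singleton.mp hx'
      rw [← mul_smul]
      exact hsub d
    · apply sup_le
      · rw [Submodule.span_le, hSW jj]
        intro x hx
        rw [Set.mem_singleton_iff] at hx
        subst hx
        exact Submodule.mem_span_singleton_self _
      · rw [hSW jj, hSW (jj + 1)]
        intro x hx
        have hx' : x ∈ Submodule.span (MonoidAlgebra k G) {c ^ (jj + 1) • v₀} := hx
        have hle : Submodule.span (MonoidAlgebra k G) {c ^ (jj + 1) • v₀} ≤
            Submodule.span (MonoidAlgebra k G) {c ^ jj • v₀} := by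
          rw [Submodule.span_le]
          intro y hy
          rw [Set.mem_singleton_iff] at hy
          subst hy
          have heq : c ^ (jj + 1) • v₀ = c • (c ^ jj • v₀) := by
            rw [← mul_smul, ← pow_succ']
          rw [heq]
          exact Submodule.smul_mem _ _ (Submodule.mem_span_singleton_self _)
        exact hle hx'
  have hii : ∀ jj : ℕ,
      MonoidAlgebra.of k G (φ 0) • (c ^ jj • v₀) -
        (lam * (ZMod.castHom (dvd_refl p) k α) ^ jj) • (c ^ jj • v₀)
        ∈ subSMul12 (V := V) (J ^ (jj + 1)) := by
    intro jj
    have h1 : φ 0 * γ = γ ^ α.val * φ 0 := by rw [← hconj0]; group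
    obtain ⟨q, hqpc, hq⟩ := st12_geom (k := k) c α.val
    have h2 : MonoidAlgebra.of k G (φ 0) * c = c * q * MonoidAlgebra.of k G (φ 0) := by
      calc MonoidAlgebra.of k G (φ 0) * c
          = MonoidAlgebra.of k G (φ 0 * γ) - MonoidAlgebra.of k G (φ 0) := by
            rw [map_mul, hec]; noncomm_ring
        _ = MonoidAlgebra.of k G (γ ^ α.val * φ 0) - MonoidAlgebra.of k G (φ 0) := by rw [h1]
        _ = ((1 + c) ^ α.val - 1) * MonoidAlgebra.of k G (φ 0) := by
            rw [map_mul, map_pow, hec]; noncomm_ring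
        _ = c * q * MonoidAlgebra.of k G (φ 0) := by rw [hq]; noncomm_ring
    have hcq : Commute c q := hpc_comm hqpc
    have h3 := st12_iter hcq h2 jj
    obtain ⟨t, hct, hqj⟩ := st12_pc_pow c hqpc jj
    have h4 : MonoidAlgebra.of k G (φ 0) • (c ^ jj • v₀) =
        lam • ((c ^ jj * q ^ jj) • v₀) := by
      rw [← mul_smul, h3, mul_smul, hv₀, hsc]
    have h5 : c ^ jj * q ^ jj =
        ((α.val : k) ^ jj) • c ^ jj + t * c ^ (jj + 1) := by
      rw [hqj, mul_add, mul_smul_comm, mul_one, ← mul_assoc, ← pow_succ,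
        ((hct.symm.pow_right (jj + 1)).eq).symm]
    have hαk : (ZMod.castHom (dvd_refl p) k) α = ((α.val : ℕ) : k) := by
      rw [ZMod.castHom_apply, ← ZMod.natCast_val]
    have h6 : lam • ((((α.val : k) ^ jj) • c ^ jj + t * c ^ (jj + 1)) • v₀) -
        (lam * ((α.val : k)) ^ jj) • (c ^ jj • v₀) = lam • ((t * c ^ (jj + 1)) • v₀) := by
      rw [add_smul, smul_add, smul_assoc, smul_smul]
      abel
    rw [h4, h5, hαk, h6]
    exact Submodule.smul_mem _ lam
      (Submodule.subset_span ⟨t * c ^ (jj + 1), hD2 jj t, v₀, rfl⟩)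
  intro j hj
  exact ⟨hSW j, hSsup j, hii j⟩
end
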